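/- arXiv:2002.06982 — 13 statements merged into one kernel-verified Lean document; each statement's English description precedes it below -/
import Mathlib

section
/- Let g be any inner product on 𝔥ₙ. Then there exist a Lie algebra automorphism φ of 𝔥ₙ and positive real numbers A₁,…,Aₙ such that the family {X₁/√A₁, …, Xₙ/√Aₙ, Y₁/√A₁, …, Yₙ/√Aₙ, Z} is orthonormal with respect to the pulled-back inner product φ*g, defined by (φ*g)(u,v) = g(φ(u),φ(v)). -/
open Module


open Real

/-- The `(2n+1)`-dimensional Heisenberg Lie algebra, modeled as
`(Fin n → ℝ) × (Fin n → ℝ) × ℝ`, where `(x, y, z)` stands for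
`∑ xᵢ Xᵢ + ∑ yᵢ Yᵢ + z Z`. -/
abbrev Heis (n : ℕ) : Type := (Fin n → ℝ) × (Fin n → ℝ) × ℝ

/-- The Heisenberg bracket, determined by `[Xᵢ, Yᵢ] = Z` (all other brackets of
basis vectors zero). -/
def heisBracket {n : ℕ} (u v : Heis n) : Heis n :=
  (0, 0, ∑ i : Fin n, (u.1 i * v.2.1 i - u.2.1 i * v.1 i))

/-- `Xᵢ` basis vector. -/
def heisX {n : ℕ} (i : Fin n) : Heis n := (Pi.single i 1, 0, 0)

/-- `Yᵢ` basis vector. -/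
def heisY {n : ℕ} (i : Fin n) : Heis n := (0, Pi.single i 1, 0)

/-- `Z` basis vector. -/
def heisZ {n : ℕ} : Heis n := (0, 0, 1)

theorem williamson : ∀ (m : ℕ) (V : Type) [AddCommGroup V] [Module ℝ V],
    FiniteDimensional ℝ V → finrank ℝ V = 2 * m →
    ∀ (g ω : V →ₗ[ℝ] V →ₗ[ℝ] ℝ),
    (∀ u v, g u v = g v u) → (∀ u, u ≠ 0 → 0 < g u u) →
    (∀ u v, ω u v = - ω v u) → (∀ u, u ≠ 0 → ∃ v, ω u v ≠ 0) →
    ∃ (e f : Fin m → V) (A : Fin m → ℝ),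
      (∀ i, 0 < A i) ∧
      (∀ i j, g (e i) (e j) = if i = j then A i else 0) ∧
      (∀ i j, g (f i) (f j) = if i = j then A i else 0) ∧
      (∀ i j, g (e i) (f j) = 0) ∧
      (∀ i j, ω (e i) (e j) = 0) ∧
      (∀ i j, ω (f i) (f j) = 0) ∧
      (∀ i j, ω (e i) (f j) = if i = j then 1 else 0) := by
  intro m
  induction m with
  | zero =>
    intro V _ _ _ _ g ω _ _ _ _
    exact ⟨fun i => i.elim0, fun i => i.elim0, fun i => i.elim0,
      fun i => i.elim0, fun i => i.elim0, fun i => i.elim0, fun i => i.elim0,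
      fun i => i.elim0, fun i => i.elim0, fun i => i.elim0⟩
  | succ m ih =>
    intro V _ _ hfd hrank g ω gsymm gpos wskew wnd
    have gnn : ∀ u, 0 ≤ g u u := by
      intro u
      rcases eq_or_ne u 0 with h | h
      · simp [h]
      · exact (gpos u h).le
    letI core : InnerProductSpace.Core ℝ V :=
      { inner := fun u v => g u v
        conj_inner_symm := fun u v => by simpa using gsymm v u
        re_inner_nonneg := fun u => by simpa using gnn u
        add_left := fun u v w => by simp
        smul_left := fun u v r => by simp
        definite := fun u h => by
          by_contra hu
          exact (gpos u hu).ne' h }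
    letI : NormedAddCommGroup V := core.toNormedAddCommGroup
    letI : InnerProductSpace ℝ V := InnerProductSpace.ofCore core.toCore
    have hip : ∀ u v : V, @inner ℝ V _ u v = g u v := fun _ _ => rfl
    have hcs : CompleteSpace V := FiniteDimensional.complete ℝ V
    set J : V →ₗ[ℝ] V :=
      { toFun := fun u => (InnerProductSpace.toDual ℝ V).symm (LinearMap.toContinuousLinearMap (ω u))
        map_add' := fun u v => by simp [map_add]
        map_smul' := fun r u => by simp [map_smul] } with hJdef
    have hJ : ∀ u v : V, @inner ℝ V _ (J u) v = ω u v := by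
      intro u v
      simp [hJdef, InnerProductSpace.toDual_symm_apply]
    have hJskew : ∀ u v : V, @inner ℝ V _ (J u) v = - @inner ℝ V _ (J v) u := by
      intro u v; rw [hJ, hJ, wskew]
    -- the symmetric operator S = -J∘J
    set S : V →ₗ[ℝ] V := -(J ∘ₗ J) with hSdef
    have hS : S.IsSymmetric := by
      intro x y
      have h1 : @inner ℝ V _ (S x) y = @inner ℝ V _ (J x) (J y) := by
        simp only [hSdef, LinearMap.neg_apply, LinearMap.comp_apply, inner_neg_left]
        rw [hJskew (J x) y, real_inner_comm]
        ring_nf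
      have h2 : @inner ℝ V _ x (S y) = @inner ℝ V _ (J x) (J y) := by
        rw [real_inner_comm]
        have hy : S y = -(J (J y)) := by simp [hSdef]
        rw [hy, inner_neg_left, hJskew (J y) x]
        ring
      rw [h1, h2]
    -- eigenvector
    obtain ⟨u, hu1, lam, hSu⟩ :
        ∃ u : V, ‖u‖ = 1 ∧ ∃ lam : ℝ, S u = lam • u := by
      have i0 : Fin (2 * (m + 1)) := ⟨0, by omega⟩
      exact ⟨hS.eigenvectorBasis hrank i0, (hS.eigenvectorBasis hrank).orthonormal.1 i0,
        hS.eigenvalues hrank i0,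
        by simpa using (hS.hasEigenvector_eigenvectorBasis hrank i0).apply_eq_smul⟩
    have hu0 : u ≠ 0 := by
      intro h; rw [h, norm_zero] at hu1; exact one_ne_zero hu1.symm
    have hJu0 : J u ≠ 0 := by
      intro h
      obtain ⟨w, hw⟩ := wnd u hu0
      exact hw (by rw [← hJ, h, inner_zero_left])
    have hgu : @inner ℝ V _ u u = 1 := by
      rw [real_inner_self_eq_norm_sq, hu1]; norm_num
    have hlam : lam = ‖J u‖ ^ 2 := by
      have h1 : @inner ℝ V _ (S u) u = lam := by
        rw [hSu, real_inner_smul_left, hgu]; ring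
      have h2 : @inner ℝ V _ (S u) u = ‖J u‖ ^ 2 := by
        have hy : S u = -(J (J u)) := by simp [hSdef]
        rw [hy, inner_neg_left, hJskew (J u) u]
        rw [← real_inner_self_eq_norm_sq]; ring
      rw [← h1, h2]
    have hlam0 : 0 < lam := by
      rw [hlam]
      exact pow_pos (norm_pos_iff.mpr hJu0) 2
    set d : ℝ := Real.sqrt lam with hddef
    have hd0 : 0 < d := Real.sqrt_pos.mpr hlam0
    have hdd : d * d = lam := Real.mul_self_sqrt hlam0.le
    set v : V := d⁻¹ • J u with hvdef
    have hnJu : ‖J u‖ = d := by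
      rw [hddef, hlam, Real.sqrt_sq (norm_nonneg _)]
    have hv1 : ‖v‖ = 1 := by
      rw [hvdef, norm_smul, hnJu, Real.norm_eq_abs, abs_inv, abs_of_pos hd0]
      exact inv_mul_cancel₀ hd0.ne'
    have hJu : J u = d • v := by
      rw [hvdef, smul_smul, mul_inv_cancel₀ hd0.ne', one_smul]
    have hJv : J v = -(d • u) := by
      have : J (J u) = -(lam • u) := by
        have := hSu
        simp only [hSdef, LinearMap.neg_apply, LinearMap.comp_apply] at this
        linear_combination (norm := module) -this
      rw [hvdef, map_smul, this, smul_neg, smul_smul]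
      rw [show d⁻¹ * lam = d by rw [← hdd, inv_mul_cancel_left₀ hd0.ne']]
    have hwuu : ∀ w : V, ω w w = 0 := by
      intro w
      have := wskew w w
      linarith
    have huv : @inner ℝ V _ u v = 0 := by
      rw [real_inner_comm, hvdef, real_inner_smul_left, hJ, hwuu, mul_zero]
    have hwuv : ω u v = d := by
      rw [← hJ, hJu, real_inner_smul_left, real_inner_self_eq_norm_sq, hv1]
      norm_num
    -- the orthogonal complement
    set K : Submodule ℝ V := Submodule.span ℝ {u, v} with hKdef
    have huK : u ∈ K := Submodule.subset_span (by simp)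
    have hvK : v ∈ K := Submodule.subset_span (by simp)
    have hon : Orthonormal ℝ ![u, v] := by
      constructor
      · intro i
        fin_cases i
        · exact hu1
        · exact hv1
      · intro i j hij
        fin_cases i <;> fin_cases j
        · exact absurd rfl hij
        · exact huv
        · rw [real_inner_comm]; exact huv
        · exact absurd rfl hij
    have hKrank : finrank ℝ K = 2 := by
      have hr : Set.range ![u, v] = {u, v} := by
        ext x
        simp [Fin.exists_fin_two, or_comm]
      rw [hKdef, ← hr, finrank_span_eq_card hon.linearIndependent]
      simp
    have hFrank : finrank ℝ (Kᗮ : Submodule ℝ V) = 2 * m := by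
      have := Submodule.finrank_add_finrank_orthogonal (K := K)
      rw [hKrank, hrank] at this
      omega
    have hperpu : ∀ w : V, w ∈ Kᗮ → @inner ℝ V _ u w = 0 := fun w hw =>
      (Submodule.mem_orthogonal K w).mp hw u huK
    have hperpv : ∀ w : V, w ∈ Kᗮ → @inner ℝ V _ v w = 0 := fun w hw =>
      (Submodule.mem_orthogonal K w).mp hw v hvK
    have hJF : ∀ w : V, w ∈ Kᗮ → J w ∈ Kᗮ := by
      intro w hw
      rw [Submodule.mem_orthogonal]
      intro y hy
      have hu' : @inner ℝ V _ u (J w) = 0 := by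
        rw [real_inner_comm, hJskew w u, hJu, real_inner_smul_left, hperpv w hw]
        ring
      have hv' : @inner ℝ V _ v (J w) = 0 := by
        rw [real_inner_comm, hJskew w v, hJv, inner_neg_left, real_inner_smul_left,
          hperpu w hw]
        ring
      induction hy using Submodule.span_induction with
      | mem x hx =>
        rcases hx with h | h
        · rw [h]; exact hu'
        · rw [h]; exact hv'
      | zero => exact inner_zero_left _
      | add x y _ _ hx hy => rw [inner_add_left, hx, hy, add_zero]
      | smul r x _ hx => rw [real_inner_smul_left, hx, mul_zero]
    -- restricted forms
    set F := Kᗮ with hFdef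
    set g' : F →ₗ[ℝ] F →ₗ[ℝ] ℝ := g.compl₁₂ F.subtype F.subtype with hg'def
    set ω' : F →ₗ[ℝ] F →ₗ[ℝ] ℝ := ω.compl₁₂ F.subtype F.subtype with hω'def
    have hg'app : ∀ a b : F, g' a b = g (a : V) (b : V) := fun a b => rfl
    have hω'app : ∀ a b : F, ω' a b = ω (a : V) (b : V) := fun a b => rfl
    obtain ⟨e', f', A', hA'pos, hgee', hgff', hgef', hwee', hwff', hwef'⟩ :=
      ih F inferInstance hFrank g' ω'
        (fun a b => gsymm _ _) (fun a ha => gpos _ (by simpa using ha))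
        (fun a b => wskew _ _)
        (by
          intro a ha
          have ha0 : (a : V) ≠ 0 := by simpa using ha
          obtain ⟨w, hw⟩ := wnd (a : V) ha0
          obtain ⟨p, hp, q, hq, hpq⟩ :
              ∃ p ∈ K, ∃ q ∈ Kᗮ, w = p + q := by
            have hsup : K ⊔ Kᗮ = ⊤ := Submodule.sup_orthogonal_of_hasOrthogonalProjection
            have : w ∈ K ⊔ Kᗮ := by rw [hsup]; trivial
            obtain ⟨p, hp, q, hq, h⟩ := Submodule.mem_sup.mp this
            exact ⟨p, hp, q, hq, h.symm⟩
          have hwp : ω (a : V) p = 0 := by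
            rw [← hJ]
            exact real_inner_comm (J (a : V)) p ▸
              ((Submodule.mem_orthogonal K (J (a : V))).mp (hJF _ a.2) p hp)
          refine ⟨⟨q, hq⟩, ?_⟩
          rw [hω'app]
          intro h0
          apply hw
          rw [hpq, map_add, hwp, zero_add]
          exact h0)
    -- assemble
    have hgu' : ∀ w : F, g u (w : V) = 0 := fun w => by
      rw [← hip]; exact hperpu _ w.2
    have hgv' : ∀ w : F, g v (w : V) = 0 := fun w => by
      rw [← hip]; exact hperpv _ w.2
    have hgu'' : ∀ w : F, g (w : V) u = 0 := fun w => by rw [gsymm]; exact hgu' w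
    have hgv'' : ∀ w : F, g (w : V) v = 0 := fun w => by rw [gsymm]; exact hgv' w
    have hwu' : ∀ w : F, ω u (w : V) = 0 := fun w => by
      rw [← hJ, hJu, real_inner_smul_left, hip, hgv' w, mul_zero]
    have hwv' : ∀ w : F, ω v (w : V) = 0 := fun w => by
      rw [← hJ, hJv, inner_neg_left, real_inner_smul_left, hip, hgu' w]
      ring
    have hwu'' : ∀ w : F, ω (w : V) u = 0 := fun w => by rw [wskew, hwu' w, neg_zero]
    have hwv'' : ∀ w : F, ω (w : V) v = 0 := fun w => by rw [wskew, hwv' w, neg_zero]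
    set t : ℝ := (Real.sqrt d)⁻¹ with htdef
    have ht2 : t * t = d⁻¹ := by
      rw [htdef, ← mul_inv, Real.mul_self_sqrt hd0.le]
    refine ⟨Fin.cons (t • u) (fun i => (e' i : V)),
            Fin.cons (t • v) (fun i => (f' i : V)),
            Fin.cons d⁻¹ A', ?_, ?_, ?_, ?_, ?_, ?_, ?_⟩
    · intro i
      refine Fin.cases ?_ ?_ i
      · simpa using inv_pos.mpr hd0
      · intro j; simpa using hA'pos j
    · -- g e e
      have hguu : g u u = 1 := by rw [← hip]; exact hgu
      intro i j
      refine Fin.cases ?_ (fun i' => ?_) i <;> refine Fin.cases ?_ (fun j' => ?_) j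
      · simp [map_smul, hguu, ht2]
      · simp [map_smul, hgu', (Fin.succ_ne_zero j').symm]
      · simp [map_smul, hgu'', Fin.succ_ne_zero i']
      · have hh := hgee' i' j'
        rw [hg'app] at hh
        simp [hh, Fin.succ_inj]
    · -- g f f
      have hgvv : g v v = 1 := by
        rw [← hip, real_inner_self_eq_norm_sq, hv1]; norm_num
      intro i j
      refine Fin.cases ?_ (fun i' => ?_) i <;> refine Fin.cases ?_ (fun j' => ?_) j
      · simp [map_smul, hgvv, ht2]
      · simp [map_smul, hgv', (Fin.succ_ne_zero j').symm]
      · simp [map_smul, hgv'', Fin.succ_ne_zero i']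
      · have hh := hgff' i' j'
        rw [hg'app] at hh
        simp [hh, Fin.succ_inj]
    · -- g e f
      have hguv : g u v = 0 := by rw [← hip]; exact huv
      intro i j
      refine Fin.cases ?_ (fun i' => ?_) i <;> refine Fin.cases ?_ (fun j' => ?_) j
      · simp [map_smul, hguv]
      · simp [map_smul, hgu']
      · simp [map_smul, hgv'']
      · have hh := hgef' i' j'
        rw [hg'app] at hh
        simp [hh]
    · -- ω e e
      intro i j
      refine Fin.cases ?_ (fun i' => ?_) i <;> refine Fin.cases ?_ (fun j' => ?_) j
      · simp [map_smul, hwuu]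
      · simp [map_smul, hwu']
      · simp [map_smul, hwu'']
      · have hh := hwee' i' j'
        rw [hω'app] at hh
        simp [hh]
    · -- ω f f
      intro i j
      refine Fin.cases ?_ (fun i' => ?_) i <;> refine Fin.cases ?_ (fun j' => ?_) j
      · simp [map_smul, hwuu]
      · simp [map_smul, hwv']
      · simp [map_smul, hwv'']
      · have hh := hwff' i' j'
        rw [hω'app] at hh
        simp [hh]
    · -- ω e f
      intro i j
      refine Fin.cases ?_ (fun i' => ?_) i <;> refine Fin.cases ?_ (fun j' => ?_) j
      · have h1 : t * (t * d) = 1 := by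
          rw [← mul_assoc, ht2, inv_mul_cancel₀ hd0.ne']
        simp [map_smul, hwuv, h1]
      · simp [map_smul, hwu', (Fin.succ_ne_zero j').symm]
      · simp [map_smul, hwv'', Fin.succ_ne_zero i']
      · have hh := hwef' i' j'
        rw [hω'app] at hh
        simp [hh, Fin.succ_inj]

noncomputable def omb (n : ℕ) : Heis n →ₗ[ℝ] Heis n →ₗ[ℝ] ℝ :=
  LinearMap.mk₂ ℝ (fun u v => ∑ i : Fin n, (u.1 i * v.2.1 i - u.2.1 i * v.1 i))
    (fun a b v => by
      rw [← Finset.sum_add_distrib]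
      exact Finset.sum_congr rfl fun i _ => by simp [Prod.fst_add, Prod.snd_add]; ring)
    (fun r a v => by
      rw [smul_eq_mul, Finset.mul_sum]
      exact Finset.sum_congr rfl fun i _ => by simp [Prod.smul_fst, Prod.smul_snd]; ring)
    (fun u a b => by
      rw [← Finset.sum_add_distrib]
      exact Finset.sum_congr rfl fun i _ => by simp [Prod.fst_add, Prod.snd_add]; ring)
    (fun r u a => by
      rw [smul_eq_mul, Finset.mul_sum]
      exact Finset.sum_congr rfl fun i _ => by simp [Prod.smul_fst, Prod.smul_snd]; ring)

lemma omb_skew {n : ℕ} (u v : Heis n) : omb n u v = - omb n v u := by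
  simp only [omb, LinearMap.mk₂_apply, ← Finset.sum_neg_distrib]
  exact Finset.sum_congr rfl fun i _ => by ring

lemma heis_finrank (n : ℕ) : Module.finrank ℝ (Heis n) = 2 * n + 1 := by
  simp [Heis, Module.finrank_prod]
  omega

lemma heisZ_ne_zero (n : ℕ) : (heisZ : Heis n) ≠ 0 := by
  simp [heisZ, Prod.ext_iff]

set_option maxHeartbeats 2000000 in
/-- For any inner product `g` on the Heisenberg Lie algebra `𝔥ₙ`, there are a Lie
algebra automorphism `φ` of `𝔥ₙ` and positive reals `A₁, …, Aₙ` such that the family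
`{X₁/√A₁, …, Xₙ/√Aₙ, Y₁/√A₁, …, Yₙ/√Aₙ, Z}` is orthonormal with respect to the
pulled-back inner product `φ*g`, where `(φ*g)(u,v) = g(φ u, φ v)`. -/
theorem stmt1 (n : ℕ) (g : Heis n →ₗ[ℝ] Heis n →ₗ[ℝ] ℝ)
    (gsymm : ∀ u v : Heis n, g u v = g v u)
    (gpos : ∀ u : Heis n, u ≠ 0 → 0 < g u u) :
    ∃ (φ : Heis n ≃ₗ[ℝ] Heis n) (A : Fin n → ℝ),
      (∀ i, 0 < A i) ∧
      (∀ u v : Heis n, φ (heisBracket u v) = heisBracket (φ u) (φ v)) ∧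
      (∀ j k : Fin n ⊕ Fin n ⊕ Unit,
        g (φ (Sum.elim (fun i => (Real.sqrt (A i))⁻¹ • heisX i)
              (Sum.elim (fun i => (Real.sqrt (A i))⁻¹ • heisY i)
                (fun _ => heisZ)) j))
          (φ (Sum.elim (fun i => (Real.sqrt (A i))⁻¹ • heisX i)
              (Sum.elim (fun i => (Real.sqrt (A i))⁻¹ • heisY i)
                (fun _ => heisZ)) k))
          = if j = k then 1 else 0) := by
  have hgz : 0 < g heisZ heisZ := gpos _ (heisZ_ne_zero n)
  set W : Submodule ℝ (Heis n) := LinearMap.ker (g heisZ) with hWdef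
  have hWrank : Module.finrank ℝ W = 2 * n := by
    have h1 := LinearMap.finrank_range_add_finrank_ker (g heisZ)
    rw [← hWdef] at h1
    have h2 : Module.finrank ℝ (LinearMap.range (g heisZ)) = 1 := by
      have : LinearMap.range (g heisZ) = ⊤ := by
        rw [LinearMap.range_eq_top]
        intro r
        exact ⟨(r / g heisZ heisZ) • heisZ, by simp [map_smul]; field_simp⟩
      rw [this]
      simp
    rw [heis_finrank, h2] at h1
    omega
  have hωZ : ∀ u : Heis n, omb n u heisZ = 0 := by
    intro u; simp [omb, heisZ]
  have hωZ' : ∀ u : Heis n, omb n heisZ u = 0 := by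
    intro u; rw [omb_skew, hωZ, neg_zero]
  obtain ⟨e, f, A₀, hA₀pos, hgee, hgff, hgef, hwee, hwff, hwef⟩ :=
    williamson n W inferInstance hWrank
      (g.compl₁₂ W.subtype W.subtype) ((omb n).compl₁₂ W.subtype W.subtype)
      (fun a b => gsymm _ _) (fun a ha => gpos _ (by simpa using ha))
      (fun a b => omb_skew _ _)
      (by
        intro a ha
        have ha0 : (a : Heis n) ≠ 0 := by simpa using ha
        by_contra hall
        push_neg at hall
        have hall' : ∀ v : Heis n, omb n (a : Heis n) v = 0 := by
          intro v
          have hv : v - (g heisZ v / g heisZ heisZ) • heisZ ∈ W := by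
            simp [hWdef, LinearMap.mem_ker, map_sub, map_smul]
            field_simp
            ring
          have h0 := hall ⟨_, hv⟩
          simp only [LinearMap.compl₁₂_apply, Submodule.coe_subtype] at h0
          rw [map_sub, map_smul] at h0
          simpa [hωZ] using h0
        have h1 : ∀ i, (a : Heis n).1 i = 0 := by
          intro i
          have := hall' (heisY i)
          simpa [omb, heisY, Pi.single_apply] using this
        have h2 : ∀ i, (a : Heis n).2.1 i = 0 := by
          intro i
          have := hall' (heisX i)
          simpa [omb, heisX, Pi.single_apply] using this
        have h3 : g heisZ (a : Heis n) = 0 := a.2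
        have h4 : (a : Heis n) = (a : Heis n).2.2 • heisZ := by
          ext i
          · simp [h1, heisZ]
          · simp [h2, heisZ]
          · simp [heisZ]
        rw [h4, map_smul] at h3
        have h5 : (a : Heis n).2.2 = 0 := by
          have := hgz
          simp only [smul_eq_mul] at h3
          rcases mul_eq_zero.mp h3 with h | h
          · exact h
          · exact absurd h this.ne'
        exact ha0 (by rw [h4, h5, zero_smul]))
  -- unprimed versions of the williamson conclusions
  have hgee' : ∀ i j, g (e i : Heis n) (e j : Heis n) = if i = j then A₀ i else 0 :=
    fun i j => hgee i j
  have hgff' : ∀ i j, g (f i : Heis n) (f j : Heis n) = if i = j then A₀ i else 0 :=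
    fun i j => hgff i j
  have hgef' : ∀ i j, g (e i : Heis n) (f j : Heis n) = 0 := fun i j => hgef i j
  have hwee' : ∀ i j, omb n (e i : Heis n) (e j : Heis n) = 0 := fun i j => hwee i j
  have hwff' : ∀ i j, omb n (f i : Heis n) (f j : Heis n) = 0 := fun i j => hwff i j
  have hwef' : ∀ i j, omb n (e i : Heis n) (f j : Heis n) = if i = j then 1 else 0 :=
    fun i j => hwef i j
  have hgWz : ∀ w : W, g (w : Heis n) heisZ = 0 := fun w => by
    rw [gsymm]; exact w.2
  -- scalings
  set c : ℝ := (Real.sqrt (g heisZ heisZ))⁻¹ with hcdef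
  have hc0 : 0 < c := inv_pos.mpr (Real.sqrt_pos.mpr hgz)
  have hcc : c * c * g heisZ heisZ = 1 := by
    rw [hcdef, ← mul_inv, Real.mul_self_sqrt hgz.le, inv_mul_cancel₀ hgz.ne']
  set s : ℝ := Real.sqrt c with hsdef
  have hss : s * s = c := Real.mul_self_sqrt hc0.le
  set x : Fin n → Heis n := fun i => s • (e i : Heis n) with hxdef
  set y : Fin n → Heis n := fun i => s • (f i : Heis n) with hydef
  set z : Heis n := c • heisZ with hzdef
  set A : Fin n → ℝ := fun i => c * A₀ i with hAdef
  have hApos : ∀ i, 0 < A i := fun i => mul_pos hc0 (hA₀pos i)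
  -- values of g on the new vectors
  have hgxx : ∀ i j, g (x i) (x j) = if i = j then A i else 0 := by
    intro i j
    simp only [hxdef, map_smul, LinearMap.smul_apply, smul_eq_mul, hgee' i j, hAdef]
    rw [← mul_assoc, hss]
    simp [mul_ite]
  have hgyy : ∀ i j, g (y i) (y j) = if i = j then A i else 0 := by
    intro i j
    simp only [hydef, map_smul, LinearMap.smul_apply, smul_eq_mul, hgff' i j, hAdef]
    rw [← mul_assoc, hss]
    simp [mul_ite]
  have hgxy : ∀ i j, g (x i) (y j) = 0 := by
    intro i j
    simp only [hxdef, hydef, map_smul, LinearMap.smul_apply, smul_eq_mul, hgef' i j]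
    ring
  have hgyx : ∀ i j, g (y i) (x j) = 0 := fun i j => by rw [gsymm]; exact hgxy j i
  have hgxz : ∀ i, g (x i) z = 0 := by
    intro i
    simp only [hxdef, hzdef, map_smul, LinearMap.smul_apply, smul_eq_mul]
    rw [hgWz (e i)]
    ring
  have hgzx : ∀ i, g z (x i) = 0 := fun i => by rw [gsymm]; exact hgxz i
  have hgyz : ∀ i, g (y i) z = 0 := by
    intro i
    simp only [hydef, hzdef, map_smul, LinearMap.smul_apply, smul_eq_mul]
    rw [hgWz (f i)]
    ring
  have hgzy : ∀ i, g z (y i) = 0 := fun i => by rw [gsymm]; exact hgyz i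
  have hgzz : g z z = 1 := by
    simp only [hzdef, map_smul, LinearMap.smul_apply, smul_eq_mul]
    rw [← mul_assoc]
    exact hcc
  -- values of omb on the new vectors
  have hwz2 : ∀ a : Heis n, omb n a z = 0 := by
    intro a
    rw [hzdef, map_smul, smul_eq_mul, hωZ, mul_zero]
  have hwz1 : ∀ a : Heis n, omb n z a = 0 := by
    intro a
    rw [omb_skew, hwz2, neg_zero]
  have hwxx : ∀ i j, omb n (x i) (x j) = 0 := by
    intro i j
    simp only [hxdef, map_smul, LinearMap.smul_apply, smul_eq_mul, hwee' i j]
    ring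
  have hwyy : ∀ i j, omb n (y i) (y j) = 0 := by
    intro i j
    simp only [hydef, map_smul, LinearMap.smul_apply, smul_eq_mul, hwff' i j]
    ring
  have hwxy : ∀ i j, omb n (x i) (y j) = if i = j then c else 0 := by
    intro i j
    simp only [hxdef, hydef, map_smul, LinearMap.smul_apply, smul_eq_mul, hwef' i j]
    rw [← mul_assoc, hss]
    simp [mul_ite]
  have hwyx : ∀ i j, omb n (y i) (x j) = if i = j then -c else 0 := by
    intro i j
    rw [omb_skew, hwxy j i]
    by_cases h : i = j <;> simp [h]
    exact fun hh => absurd hh.symm h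
  -- the linear map φ₀
  set φ₀ : Heis n →ₗ[ℝ] Heis n :=
    { toFun := fun u => (∑ i, u.1 i • x i) + ((∑ i, u.2.1 i • y i) + u.2.2 • z)
      map_add' := by
        intro a b
        simp only [Prod.fst_add, Prod.snd_add, Pi.add_apply, add_smul,
          Finset.sum_add_distrib]
        module
      map_smul' := by
        intro r a
        simp only [Prod.smul_fst, Prod.smul_snd, Pi.smul_apply, smul_eq_mul, mul_smul,
          ← Finset.smul_sum, smul_add, RingHom.id_apply] } with hφ₀def
  have hφ₀app : ∀ u : Heis n,
      φ₀ u = (∑ i, u.1 i • x i) + ((∑ i, u.2.1 i • y i) + u.2.2 • z) := fun u => rfl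
  -- master formulas
  have hgφ : ∀ u v : Heis n, g (φ₀ u) (φ₀ v) =
      (∑ i, u.1 i * v.1 i * A i) + (∑ i, u.2.1 i * v.2.1 i * A i) + u.2.2 * v.2.2 := by
    intro u v
    rw [hφ₀app, hφ₀app]
    simp only [map_add, map_sum, map_smul, LinearMap.add_apply, LinearMap.sum_apply,
      LinearMap.smul_apply, smul_eq_mul]
    simp only [hgxx, hgyy, hgxy, hgyx, hgxz, hgzx, hgyz, hgzy, hgzz, mul_ite, mul_zero,
      mul_one, Finset.sum_ite_eq, Finset.mem_univ, if_true, Finset.sum_const_zero,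
      add_zero, zero_add, Finset.sum_ite_eq', Finset.mem_univ, if_true]
    have h1 : ∀ (p q : Fin n → ℝ), ∑ i, p i * (q i * A i) = ∑ i, q i * p i * A i :=
      fun p q => Finset.sum_congr rfl fun i _ => by ring
    rw [h1, h1]
    ring
  have hωφ : ∀ u v : Heis n, omb n (φ₀ u) (φ₀ v) = c * omb n u v := by
    intro u v
    rw [hφ₀app, hφ₀app]
    simp only [map_add, map_sum, map_smul, LinearMap.add_apply, LinearMap.sum_apply,
      LinearMap.smul_apply, smul_eq_mul]
    simp only [hwxx, hwyy, hwxy, hwyx, hwz1, hwz2, mul_ite, mul_zero, mul_one,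
      mul_neg, Finset.sum_ite_eq, Finset.mem_univ, if_true, Finset.sum_const_zero,
      add_zero, zero_add]
    simp only [omb, LinearMap.mk₂_apply]
    rw [Finset.mul_sum, ← Finset.sum_add_distrib]
    simp only [Finset.sum_ite_eq', Finset.mem_univ, if_true]
    exact Finset.sum_congr rfl fun i _ => by ring
  -- injectivity, hence bijectivity
  have hinj : Function.Injective φ₀ := by
    rw [injective_iff_map_eq_zero]
    intro u hu
    have h0 : g (φ₀ u) (φ₀ u) = 0 := by rw [hu]; simp
    rw [hgφ] at h0
    have hn1 : ∀ i ∈ Finset.univ, (0:ℝ) ≤ u.1 i * u.1 i * A i :=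
      fun i _ => mul_nonneg (mul_self_nonneg _) (hApos i).le
    have hn2 : ∀ i ∈ Finset.univ, (0:ℝ) ≤ u.2.1 i * u.2.1 i * A i :=
      fun i _ => mul_nonneg (mul_self_nonneg _) (hApos i).le
    have hs1 : (0:ℝ) ≤ ∑ i, u.1 i * u.1 i * A i := Finset.sum_nonneg hn1
    have hs2 : (0:ℝ) ≤ ∑ i, u.2.1 i * u.2.1 i * A i := Finset.sum_nonneg hn2
    have hs3 : (0:ℝ) ≤ u.2.2 * u.2.2 := mul_self_nonneg _
    have hz1 : ∑ i, u.1 i * u.1 i * A i = 0 := by linarith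
    have hz2 : ∑ i, u.2.1 i * u.2.1 i * A i = 0 := by linarith
    have hz3 : u.2.2 * u.2.2 = 0 := by linarith
    have hu1 : ∀ i, u.1 i = 0 := by
      intro i
      have := (Finset.sum_eq_zero_iff_of_nonneg hn1).mp hz1 i (Finset.mem_univ i)
      rcases mul_eq_zero.mp this with h | h
      · exact mul_self_eq_zero.mp h
      · exact absurd h (hApos i).ne'
    have hu2 : ∀ i, u.2.1 i = 0 := by
      intro i
      have := (Finset.sum_eq_zero_iff_of_nonneg hn2).mp hz2 i (Finset.mem_univ i)
      rcases mul_eq_zero.mp this with h | h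
      · exact mul_self_eq_zero.mp h
      · exact absurd h (hApos i).ne'
    have hu3 : u.2.2 = 0 := mul_self_eq_zero.mp hz3
    ext i
    · simp [hu1]
    · simp [hu2]
    · simp [hu3]
  have hsurj : Function.Surjective φ₀ := (LinearMap.injective_iff_surjective).mp hinj
  set φ : Heis n ≃ₗ[ℝ] Heis n := LinearEquiv.ofBijective φ₀ ⟨hinj, hsurj⟩ with hφdef
  have hφapp : ∀ u : Heis n, φ u = φ₀ u := fun u => rfl
  -- basis images
  have hφX : ∀ i, φ₀ (heisX i) = x i := by
    intro i
    rw [hφ₀app]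
    simp [heisX, Pi.single_apply, ite_smul]
  have hφY : ∀ i, φ₀ (heisY i) = y i := by
    intro i
    rw [hφ₀app]
    simp [heisY, Pi.single_apply, ite_smul]
  have hφZ : φ₀ heisZ = z := by
    rw [hφ₀app]
    simp [heisZ]
  -- bracket preservation
  have hbr : ∀ u v : Heis n, heisBracket u v = omb n u v • heisZ := by
    intro u v
    simp only [heisBracket, heisZ, omb, LinearMap.mk₂_apply, Prod.smul_mk, smul_eq_mul,
      mul_one, smul_zero]
  have hbracket : ∀ u v : Heis n, φ (heisBracket u v) = heisBracket (φ u) (φ v) := by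
    intro u v
    rw [hφapp, hφapp, hφapp, hbr, hbr, map_smul, hφZ, hωφ, hzdef, smul_smul, mul_comm]
  -- the square-root coefficients
  have hsa : ∀ i, (Real.sqrt (A i))⁻¹ * ((Real.sqrt (A i))⁻¹ * A i) = 1 := by
    intro i
    rw [← mul_assoc, ← mul_inv, Real.mul_self_sqrt (hApos i).le,
      inv_mul_cancel₀ (hApos i).ne']
  refine ⟨φ, A, hApos, hbracket, ?_⟩
  intro j k
  rcases j with i | j'
  · rcases k with i' | k'
    · -- X vs X
      simp only [Sum.elim_inl, hφapp, map_smul, hφX, hgxx, map_smul,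
        LinearMap.smul_apply, smul_eq_mul, Sum.inl.injEq]
      by_cases h : i = i'
      · subst h
        simp [hsa i]
      · simp [h]
    · rcases k' with i' | u'
      · simp only [Sum.elim_inl, Sum.elim_inr, hφapp, map_smul, hφX, hφY, hgxy,
          LinearMap.smul_apply, smul_eq_mul, mul_zero]
        simp
      · simp only [Sum.elim_inl, Sum.elim_inr, hφapp, map_smul, hφX, hφZ, hgxz,
          LinearMap.smul_apply, smul_eq_mul, mul_zero]
        simp
  · rcases j' with i | u
    · rcases k with i' | k'
      · simp only [Sum.elim_inl, Sum.elim_inr, hφapp, map_smul, hφY, hφX, hgyx,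
          LinearMap.smul_apply, smul_eq_mul, mul_zero]
        simp
      · rcases k' with i' | u'
        · simp only [Sum.elim_inr, Sum.elim_inl, hφapp, map_smul, hφY, hgyy,
            LinearMap.smul_apply, smul_eq_mul, Sum.inr.injEq, Sum.inl.injEq]
          by_cases h : i = i'
          · subst h
            simp [hsa i]
          · simp [h]
        · simp only [Sum.elim_inr, Sum.elim_inl, hφapp, map_smul, hφY, hφZ, hgyz,
            LinearMap.smul_apply, smul_eq_mul, mul_zero]
          simp
    · rcases k with i' | k'
      · simp only [Sum.elim_inr, Sum.elim_inl, hφapp, map_smul, hφZ, hφX, hgzx,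
          LinearMap.smul_apply, smul_eq_mul, mul_zero]
        simp
      · rcases k' with i' | u'
        · simp only [Sum.elim_inr, Sum.elim_inl, hφapp, map_smul, hφZ, hφY, hgzy,
            LinearMap.smul_apply, smul_eq_mul, mul_zero]
          simp
        · simp only [Sum.elim_inr, hφapp, hφZ, hgzz]
          simp
end

section
/- Fix A > 0, B ∈ ℝ and (x₀,y₀,z₀) ∈ ℝ³ with z₀ ≠ B. Define x,y,z : ℝ → ℝ by x(t) = (A/(z₀−B))·(x₀ sin(t(z₀−B)/A) − y₀(1−cos(t(z₀−B)/A))), y(t) = (A/(z₀−B))·(x₀(1−cos(t(z₀−B)/A)) + y₀ sin(t(z₀−B)/A)), and z(t) = (z₀ + A(x₀²+y₀²)/(2(z₀−B)))·t − (A²(x₀²+y₀²)/(2(z₀−B)²))·sin(t(z₀−B)/A). Then x(0)=y(0)=z(0)=0, x'(0)=x₀, y'(0)=y₀, z'(0)=z₀, and for all t ∈ ℝ: x''(t) = −((z₀−B)/A)·y'(t), y''(t) = ((z₀−B)/A)·x'(t), and z'(t) + (x'(t)y(t) − x(t)y'(t))/2 = z₀. -/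
open Real

/-- The explicit spiraling curves solve the magnetic geodesic equations of the
three-dimensional Heisenberg group (metric parameter `A`, magnetic strength `B`)
in exponential coordinates, with the prescribed initial conditions, when `z₀ ≠ B`. -/
theorem stmt2 (A B x₀ y₀ z₀ : ℝ) (hA : 0 < A) (hz : z₀ ≠ B)
    (x y z : ℝ → ℝ)
    (hx : ∀ t, x t = (A / (z₀ - B)) *
      (x₀ * Real.sin (t * (z₀ - B) / A) - y₀ * (1 - Real.cos (t * (z₀ - B) / A))))
    (hy : ∀ t, y t = (A / (z₀ - B)) *
      (x₀ * (1 - Real.cos (t * (z₀ - B) / A)) + y₀ * Real.sin (t * (z₀ - B) / A)))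
    (hz' : ∀ t, z t = (z₀ + A * (x₀ ^ 2 + y₀ ^ 2) / (2 * (z₀ - B))) * t
      - (A ^ 2 * (x₀ ^ 2 + y₀ ^ 2) / (2 * (z₀ - B) ^ 2)) * Real.sin (t * (z₀ - B) / A)) :
    x 0 = 0 ∧ y 0 = 0 ∧ z 0 = 0 ∧
    deriv x 0 = x₀ ∧ deriv y 0 = y₀ ∧ deriv z 0 = z₀ ∧
    (∀ t, deriv (deriv x) t = -((z₀ - B) / A) * deriv y t) ∧
    (∀ t, deriv (deriv y) t = ((z₀ - B) / A) * deriv x t) ∧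
    (∀ t, deriv z t + (deriv x t * y t - x t * deriv y t) / 2 = z₀) := by
  have hzB : z₀ - B ≠ 0 := sub_ne_zero.mpr hz
  have hA' : A ≠ 0 := hA.ne'
  set ω : ℝ := (z₀ - B) / A with hω
  have hωne : ω ≠ 0 := div_ne_zero hzB hA'
  have harg : ∀ t : ℝ, t * (z₀ - B) / A = t * ω := by intro t; rw [hω]; ring
  have hs : ∀ t : ℝ, HasDerivAt (fun t : ℝ => Real.sin (t * ω)) (Real.cos (t * ω) * ω) t :=
    fun t => by have := (Real.hasDerivAt_sin (t * ω)).comp t (hasDerivAt_mul_const ω); exact this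
  have hc : ∀ t : ℝ, HasDerivAt (fun t : ℝ => Real.cos (t * ω)) (-Real.sin (t * ω) * ω) t :=
    fun t => by have := (Real.hasDerivAt_cos (t * ω)).comp t (hasDerivAt_mul_const ω); exact this
  have hkω : (A / (z₀ - B)) * ω = 1 := by rw [hω]; field_simp
  -- derivative of x
  have hxd : ∀ t, HasDerivAt x (x₀ * Real.cos (t * ω) - y₀ * Real.sin (t * ω)) t := by
    intro t
    have h : HasDerivAt
        (fun s => (A / (z₀ - B)) * (x₀ * Real.sin (s * ω) - y₀ * (1 - Real.cos (s * ω))))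
        ((A / (z₀ - B)) * (x₀ * (Real.cos (t * ω) * ω)
          - y₀ * (0 - (-Real.sin (t * ω) * ω)))) t :=
      (((hs t).const_mul x₀).sub (((hasDerivAt_const t (1 : ℝ)).sub (hc t)).const_mul y₀)).const_mul _
    have heq : (fun s => (A / (z₀ - B)) * (x₀ * Real.sin (s * ω) - y₀ * (1 - Real.cos (s * ω)))) = x := by
      funext s; rw [hx s, harg s]
    rw [heq] at h
    convert h using 1
    rw [hω]; field_simp; ring
  have hyd : ∀ t, HasDerivAt y (x₀ * Real.sin (t * ω) + y₀ * Real.cos (t * ω)) t := by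
    intro t
    have h : HasDerivAt
        (fun s => (A / (z₀ - B)) * (x₀ * (1 - Real.cos (s * ω)) + y₀ * Real.sin (s * ω)))
        ((A / (z₀ - B)) * (x₀ * (0 - (-Real.sin (t * ω) * ω))
          + y₀ * (Real.cos (t * ω) * ω))) t :=
      ((((hasDerivAt_const t (1 : ℝ)).sub (hc t)).const_mul x₀).add ((hs t).const_mul y₀)).const_mul _
    have heq : (fun s => (A / (z₀ - B)) * (x₀ * (1 - Real.cos (s * ω)) + y₀ * Real.sin (s * ω))) = y := by
      funext s; rw [hy s, harg s]
    rw [heq] at h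
    convert h using 1
    rw [hω]; field_simp; ring
  set r : ℝ := x₀ ^ 2 + y₀ ^ 2 with hr
  have hC2ω : (A ^ 2 * r / (2 * (z₀ - B) ^ 2)) * ω = A * r / (2 * (z₀ - B)) := by
    rw [hω]; field_simp
  have hzd : ∀ t, HasDerivAt z (z₀ + (A * r / (2 * (z₀ - B))) * (1 - Real.cos (t * ω))) t := by
    intro t
    have h : HasDerivAt
        (fun s => (z₀ + A * r / (2 * (z₀ - B))) * s
          - (A ^ 2 * r / (2 * (z₀ - B) ^ 2)) * Real.sin (s * ω))
        ((z₀ + A * r / (2 * (z₀ - B))) * 1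
          - (A ^ 2 * r / (2 * (z₀ - B) ^ 2)) * (Real.cos (t * ω) * ω)) t :=
      ((hasDerivAt_id t).const_mul _).sub ((hs t).const_mul _)
    have heq : (fun s => (z₀ + A * r / (2 * (z₀ - B))) * s
        - (A ^ 2 * r / (2 * (z₀ - B) ^ 2)) * Real.sin (s * ω)) = z := by
      funext s; rw [hz' s, harg s]
    rw [heq] at h
    convert h using 1
    rw [show (A ^ 2 * r / (2 * (z₀ - B) ^ 2)) * (Real.cos (t * ω) * ω)
      = ((A ^ 2 * r / (2 * (z₀ - B) ^ 2)) * ω) * Real.cos (t * ω) by ring, hC2ω]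
    ring
  have hdx : ∀ t, deriv x t = x₀ * Real.cos (t * ω) - y₀ * Real.sin (t * ω) := fun t => (hxd t).deriv
  have hdy : ∀ t, deriv y t = x₀ * Real.sin (t * ω) + y₀ * Real.cos (t * ω) := fun t => (hyd t).deriv
  have hdz : ∀ t, deriv z t = z₀ + (A * r / (2 * (z₀ - B))) * (1 - Real.cos (t * ω)) :=
    fun t => (hzd t).deriv
  have hddx : ∀ t, HasDerivAt (deriv x)
      (x₀ * (-Real.sin (t * ω) * ω) - y₀ * (Real.cos (t * ω) * ω)) t := by
    intro t
    have h : HasDerivAt (fun s => x₀ * Real.cos (s * ω) - y₀ * Real.sin (s * ω))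
        (x₀ * (-Real.sin (t * ω) * ω) - y₀ * (Real.cos (t * ω) * ω)) t :=
      ((hc t).const_mul x₀).sub ((hs t).const_mul y₀)
    exact h.congr_of_eventuallyEq (Filter.Eventually.of_forall fun s => (hdx s))
  have hddy : ∀ t, HasDerivAt (deriv y)
      (x₀ * (Real.cos (t * ω) * ω) + y₀ * (-Real.sin (t * ω) * ω)) t := by
    intro t
    have h : HasDerivAt (fun s => x₀ * Real.sin (s * ω) + y₀ * Real.cos (s * ω))
        (x₀ * (Real.cos (t * ω) * ω) + y₀ * (-Real.sin (t * ω) * ω)) t :=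
      ((hs t).const_mul x₀).add ((hc t).const_mul y₀)
    exact h.congr_of_eventuallyEq (Filter.Eventually.of_forall fun s => (hdy s))
  refine ⟨?_, ?_, ?_, ?_, ?_, ?_, ?_, ?_, ?_⟩
  · simp [hx 0]
  · simp [hy 0]
  · simp [hz' 0]
  · rw [hdx 0]; simp
  · rw [hdy 0]; simp
  · rw [hdz 0]; simp
  · intro t
    rw [(hddx t).deriv, hdy t, hω]; ring
  · intro t
    rw [(hddy t).deriv, hdx t, hω]; ring
  · intro t
    rw [hdz t, hdx t, hdy t, hx t, hy t, harg t]
    have hsc : Real.sin (t * ω) ^ 2 + Real.cos (t * ω) ^ 2 = 1 := Real.sin_sq_add_cos_sq _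
    simp only [hr]
    field_simp
    linear_combination (-A * (x₀ ^ 2 + y₀ ^ 2)) * hsc
end

section
/- There exists a nonconstant periodic magnetic geodesic of energy E > 0 if and only if 0 < E < |B|. Moreover, for 0 < E < |B|, the spiraling magnetic geodesic σ_{u₀,v₀,z₀} of energy E (z₀ ≠ 0, (u₀,v₀) ≠ (0,0)) is periodic if and only if z₀ = −sgn(B)·√(B²−E²); in that case (u₀,v₀) may be any pair with u₀²+v₀² = A(E²−(z₀+B)²), which is automatically positive, and the resulting geodesic is periodic with minimal positive period 2πA/√(B²−E²). -/
open Real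

noncomputable section

/-- The simply connected three-dimensional Heisenberg group, modeled as `ℝ³` in
exponential coordinates. -/
abbrev H3 : Type := ℝ × ℝ × ℝ

/-- Heisenberg group multiplication in exponential coordinates. -/
def Hmul (p q : H3) : H3 :=
  (p.1 + q.1, p.2.1 + q.2.1, p.2.2 + q.2.2 + (p.1 * q.2.1 - p.2.1 * q.1) / 2)

open Classical in
/-- The magnetic geodesic through the identity with parameters `(u₀, v₀, z₀)`, for
metric parameter `A` and magnetic strength `B`. -/
def magGeo (A B u₀ v₀ z₀ : ℝ) : ℝ → H3 := fun t =>
  if z₀ ≠ 0 then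
    ((u₀ / z₀) * Real.sin (z₀ * t / A) - (v₀ / z₀) * (1 - Real.cos (z₀ * t / A)),
     (u₀ / z₀) * (1 - Real.cos (z₀ * t / A)) + (v₀ / z₀) * Real.sin (z₀ * t / A),
     (z₀ + B + (u₀ ^ 2 + v₀ ^ 2) / (2 * A * z₀)) * t
       - ((u₀ ^ 2 + v₀ ^ 2) / (2 * z₀ ^ 2)) * Real.sin (z₀ * t / A))
  else (u₀ * t / A, v₀ * t / A, B * t)

lemma hmul_cancel {a p q : H3} (h : Hmul a p = Hmul a q) : p = q := by
  obtain ⟨a1, a2, a3⟩ := a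
  obtain ⟨p1, p2, p3⟩ := p
  obtain ⟨q1, q2, q3⟩ := q
  simp only [Hmul, Prod.mk.injEq] at h ⊢
  obtain ⟨h1, h2, h3⟩ := h
  have e1 : p1 = q1 := by linarith
  have e2 : p2 = q2 := by linarith
  subst e1; subst e2
  exact ⟨rfl, rfl, by linarith⟩

lemma sumsq_pos {u v : ℝ} (h : (u, v) ≠ ((0:ℝ), (0:ℝ))) : 0 < u ^ 2 + v ^ 2 := by
  rcases lt_or_eq_of_le (by positivity : (0:ℝ) ≤ u ^ 2 + v ^ 2) with h' | h'
  · exact h'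
  · exfalso
    have hu : u = 0 := by
      have : u ^ 2 = 0 := by nlinarith [sq_nonneg u, sq_nonneg v]
      exact pow_eq_zero_iff two_ne_zero |>.mp this
    have hv : v = 0 := by
      have : v ^ 2 = 0 := by nlinarith [sq_nonneg u, sq_nonneg v]
      exact pow_eq_zero_iff two_ne_zero |>.mp this
    exact h (by simp [hu, hv])

lemma per_iff {A B u v z : ℝ} (hA : 0 < A) (hz : z ≠ 0) (huv : u ^ 2 + v ^ 2 ≠ 0) (ω : ℝ) :
    (∀ t, magGeo A B u v z (t + ω) = magGeo A B u v z t) ↔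
    (Real.cos (z * ω / A) = 1 ∧ (z + B + (u ^ 2 + v ^ 2) / (2 * A * z)) * ω = 0) := by
  constructor
  · intro h
    have h0 := h 0
    simp only [magGeo, if_pos hz, zero_add, mul_zero, zero_div, Real.sin_zero, Real.cos_zero,
      sub_self, sub_zero, add_zero, Prod.mk.injEq] at h0
    obtain ⟨h1, h2, h3⟩ := h0
    field_simp at h1 h2
    have hc1 : (u ^ 2 + v ^ 2) * (1 - Real.cos (z * ω / A)) = 0 := by
      linear_combination (-v) * h1 + u * h2
    have hs1 : (u ^ 2 + v ^ 2) * Real.sin (z * ω / A) = 0 := by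
      linear_combination u * h1 + v * h2
    have hc : Real.cos (z * ω / A) = 1 := by
      have := (mul_eq_zero.mp hc1).resolve_left huv
      linarith
    have hs : Real.sin (z * ω / A) = 0 := (mul_eq_zero.mp hs1).resolve_left huv
    refine ⟨hc, ?_⟩
    linear_combination h3 + ((u ^ 2 + v ^ 2) / (2 * z ^ 2)) * hs
  · rintro ⟨hc, hC⟩
    have hs : Real.sin (z * ω / A) = 0 := by
      have h2 : Real.sin (z * ω / A) ^ 2 = 0 := by
        nlinarith [Real.sin_sq_add_cos_sq (z * ω / A)]
      exact pow_eq_zero_iff two_ne_zero |>.mp h2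
    intro t
    have harg : z * (t + ω) / A = z * t / A + z * ω / A := by field_simp
    simp only [magGeo, if_pos hz, harg, Real.sin_add, Real.cos_add, hc, hs, Prod.mk.injEq]
    exact ⟨by ring, by ring, by linear_combination hC⟩

lemma energy_eq {A B E u v z : ℝ} (hA : 0 < A)
    (hEn : E ^ 2 = (u ^ 2 + v ^ 2) / A + (z + B) ^ 2) :
    u ^ 2 + v ^ 2 = A * (E ^ 2 - (z + B) ^ 2) := by
  field_simp at hEn
  linarith

lemma C_zero {A B E u v z : ℝ} (hA : 0 < A) (hz : z ≠ 0) (hzsq : z ^ 2 = B ^ 2 - E ^ 2)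
    (hEn : E ^ 2 = (u ^ 2 + v ^ 2) / A + (z + B) ^ 2) :
    z + B + (u ^ 2 + v ^ 2) / (2 * A * z) = 0 := by
  have h := energy_eq hA hEn
  field_simp
  linear_combination h + A * hzsq

lemma zsq_of_C {A B E u v z : ℝ} (hA : 0 < A) (hz : z ≠ 0)
    (hEn : E ^ 2 = (u ^ 2 + v ^ 2) / A + (z + B) ^ 2)
    (hC : z + B + (u ^ 2 + v ^ 2) / (2 * A * z) = 0) :
    z ^ 2 = B ^ 2 - E ^ 2 := by
  have h := energy_eq hA hEn
  field_simp at hC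
  have hAz : A * z ^ 2 = A * (B ^ 2 - E ^ 2) := by linear_combination hC - h
  exact mul_left_cancel₀ hA.ne' hAz

lemma zstar_facts {B E : ℝ} (hE : 0 < E) (hEB : E < |B|) :
    0 < Real.sqrt (B ^ 2 - E ^ 2) ∧ Real.sqrt (B ^ 2 - E ^ 2) ^ 2 = B ^ 2 - E ^ 2 ∧
    (-(Real.sign B) * Real.sqrt (B ^ 2 - E ^ 2)) ^ 2 = B ^ 2 - E ^ 2 ∧
    |(-(Real.sign B) * Real.sqrt (B ^ 2 - E ^ 2))| = Real.sqrt (B ^ 2 - E ^ 2) ∧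
    (-(Real.sign B) * Real.sqrt (B ^ 2 - E ^ 2)) *
      ((-(Real.sign B) * Real.sqrt (B ^ 2 - E ^ 2)) + B) < 0 := by
  have hE2B : E ^ 2 < B ^ 2 := by nlinarith [sq_abs B, abs_nonneg B]
  have hr2 : Real.sqrt (B ^ 2 - E ^ 2) ^ 2 = B ^ 2 - E ^ 2 := Real.sq_sqrt (by linarith)
  have hrpos : 0 < Real.sqrt (B ^ 2 - E ^ 2) := Real.sqrt_pos.mpr (by linarith)
  set r := Real.sqrt (B ^ 2 - E ^ 2) with hrdef
  have hB : B ≠ 0 := by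
    intro h
    rw [h] at hEB; simp at hEB; linarith
  have hrB : r < |B| := by nlinarith [sq_abs B, abs_nonneg B]
  rcases hB.lt_or_gt with hBneg | hBpos
  · have hs : Real.sign B = -1 := Real.sign_of_neg hBneg
    rw [hs]
    have hBabs : |B| = -B := abs_of_neg hBneg
    refine ⟨hrpos, hr2, by ring_nf; linarith [hr2], ?_, ?_⟩
    · rw [show -(-1 : ℝ) * r = r by ring, abs_of_pos hrpos]
    · rw [show -(-1 : ℝ) * r = r by ring]
      apply mul_neg_of_pos_of_neg hrpos
      linarith [hrB]
  · have hs : Real.sign B = 1 := Real.sign_of_pos hBpos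
    rw [hs]
    have hBabs : |B| = B := abs_of_pos hBpos
    refine ⟨hrpos, hr2, by ring_nf; linarith [hr2], ?_, ?_⟩
    · rw [show -(1 : ℝ) * r = -r by ring, abs_neg, abs_of_pos hrpos]
    · rw [show -(1 : ℝ) * r = -r by ring]
      apply mul_neg_of_neg_of_pos (by linarith)
      linarith [hrB]

lemma z_unique {B E r z₀ : ℝ} (hE : 0 < E) (hrpos : 0 < r) (hr2 : r ^ 2 = B ^ 2 - E ^ 2)
    (hz0sq : z₀ ^ 2 = B ^ 2 - E ^ 2) (hprod : z₀ * (z₀ + B) < 0) :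
    z₀ = -(Real.sign B) * r := by
  have hB : B ≠ 0 := by
    intro h; rw [h] at hprod; nlinarith [sq_nonneg z₀]
  have hfac : (z₀ - r) * (z₀ + r) = 0 := by linear_combination hz0sq - hr2
  rcases hB.lt_or_gt with hBneg | hBpos
  · rw [Real.sign_of_neg hBneg, show -(-1 : ℝ) * r = r by ring]
    rcases mul_eq_zero.mp hfac with h | h
    · linarith
    · exfalso
      have hz0 : z₀ = -r := by linarith
      rw [hz0] at hprod
      nlinarith
  · rw [Real.sign_of_pos hBpos, show -(1 : ℝ) * r = -r by ring]
    rcases mul_eq_zero.mp hfac with h | h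
    · exfalso
      have hz0 : z₀ = r := by linarith
      rw [hz0] at hprod
      nlinarith
    · linarith

/-- On the three-dimensional Heisenberg group with metric parameter `A > 0` and
magnetic strength `B`, nonconstant periodic magnetic geodesics of energy `E > 0` exist
iff `0 < E < |B|`; for `0 < E < |B|`, a spiraling magnetic geodesic of energy `E` is
periodic iff `z₀ = -sgn(B)·√(B² - E²)`, in which case `(u₀, v₀)` may be any pair with
`u₀² + v₀² = A(E² - (z₀+B)²)` (automatically positive), and the minimal positive
period is `2πA/√(B² - E²)`. -/
theorem stmt4 (A B E : ℝ) (hA : 0 < A) (hE : 0 < E) :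
    ((∃ (a : H3) (u₀ v₀ z₀ ω : ℝ),
        E ^ 2 = (u₀ ^ 2 + v₀ ^ 2) / A + (z₀ + B) ^ 2 ∧ ω ≠ 0 ∧
        (∀ t, Hmul a (magGeo A B u₀ v₀ z₀ (t + ω)) = Hmul a (magGeo A B u₀ v₀ z₀ t)) ∧
        (∃ t s, Hmul a (magGeo A B u₀ v₀ z₀ t) ≠ Hmul a (magGeo A B u₀ v₀ z₀ s)))
      ↔ E < |B|) ∧
    (E < |B| →
      (∀ u₀ v₀ z₀ : ℝ, z₀ ≠ 0 → (u₀, v₀) ≠ (0, 0) →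
          E ^ 2 = (u₀ ^ 2 + v₀ ^ 2) / A + (z₀ + B) ^ 2 →
        ((∃ ω : ℝ, ω ≠ 0 ∧ ∀ t, magGeo A B u₀ v₀ z₀ (t + ω) = magGeo A B u₀ v₀ z₀ t)
          ↔ z₀ = -(Real.sign B) * Real.sqrt (B ^ 2 - E ^ 2))) ∧
      (0 < A * (E ^ 2 - (-(Real.sign B) * Real.sqrt (B ^ 2 - E ^ 2) + B) ^ 2)) ∧
      (∀ u₀ v₀ : ℝ,
        u₀ ^ 2 + v₀ ^ 2
          = A * (E ^ 2 - (-(Real.sign B) * Real.sqrt (B ^ 2 - E ^ 2) + B) ^ 2) →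
        IsLeast {ω : ℝ | 0 < ω ∧
            ∀ t, magGeo A B u₀ v₀ (-(Real.sign B) * Real.sqrt (B ^ 2 - E ^ 2)) (t + ω)
              = magGeo A B u₀ v₀ (-(Real.sign B) * Real.sqrt (B ^ 2 - E ^ 2)) t}
          (2 * π * A / Real.sqrt (B ^ 2 - E ^ 2)))) := by
  have hAne := hA.ne'
  constructor
  · constructor
    · rintro ⟨a, u₀, v₀, z₀, ω, hEn, hω, hper, t₁, s₁, hne⟩
      have hper' : ∀ t, magGeo A B u₀ v₀ z₀ (t + ω) = magGeo A B u₀ v₀ z₀ t :=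
        fun t => hmul_cancel (hper t)
      have hne' : magGeo A B u₀ v₀ z₀ t₁ ≠ magGeo A B u₀ v₀ z₀ s₁ :=
        fun h => hne (congrArg (Hmul a) h)
      by_cases hz : z₀ = 0
      · exfalso
        subst hz
        have h0 := hper' 0
        simp only [magGeo, if_neg (by simp : ¬((0:ℝ) ≠ 0)), zero_add, mul_zero, zero_div,
          zero_mul, Prod.mk.injEq] at h0
        obtain ⟨h1, h2, h3⟩ := h0
        have hu : u₀ = 0 := by
          have := (div_eq_zero_iff.mp h1).resolve_right hAne
          exact (mul_eq_zero.mp this).resolve_right hω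
        have hv : v₀ = 0 := by
          have := (div_eq_zero_iff.mp h2).resolve_right hAne
          exact (mul_eq_zero.mp this).resolve_right hω
        have hB0 : B = 0 := (mul_eq_zero.mp h3).resolve_right hω
        exact hne' (by simp [magGeo, hu, hv, hB0])
      by_cases huv : u₀ ^ 2 + v₀ ^ 2 = 0
      · exfalso
        have hu : u₀ = 0 := by
          have : u₀ ^ 2 = 0 := by nlinarith [sq_nonneg u₀, sq_nonneg v₀]
          exact pow_eq_zero_iff two_ne_zero |>.mp this
        have hv : v₀ = 0 := by
          have : v₀ ^ 2 = 0 := by nlinarith [sq_nonneg u₀, sq_nonneg v₀]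
          exact pow_eq_zero_iff two_ne_zero |>.mp this
        subst hu; subst hv
        have h0 := hper' 0
        simp only [magGeo, if_pos hz, zero_add, mul_zero, zero_div, zero_mul, sub_zero,
          add_zero, zero_sub, Prod.mk.injEq] at h0
        have hzB : z₀ + B = 0 := by
          have h3 := h0.2.2
          norm_num at h3
          rcases h3 with h3 | h3
          · exact h3
          · exact absurd h3 hω
        exact hne' (by simp [magGeo, hz, hzB])
      · obtain ⟨hc, hCω⟩ := (per_iff hA hz huv ω).mp hper'
        have hC := (mul_eq_zero.mp hCω).resolve_right hω
        have hz2 : z₀ ^ 2 = B ^ 2 - E ^ 2 := zsq_of_C hA hz hEn hC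
        have hz2pos : 0 < z₀ ^ 2 :=
          lt_of_le_of_ne (sq_nonneg _) (Ne.symm (pow_ne_zero 2 hz))
        have hEB2 : E ^ 2 < |B| ^ 2 := by rw [sq_abs]; linarith
        exact lt_of_pow_lt_pow_left₀ 2 (abs_nonneg B) hEB2
    · intro hEB
      obtain ⟨hrpos, hr2, hzsq, habs, hprod⟩ := zstar_facts hE hEB
      set r := Real.sqrt (B ^ 2 - E ^ 2) with hrdef
      set z₁ := -(Real.sign B) * r with hz1def
      have hzne : z₁ ≠ 0 := by
        intro h
        rw [h, abs_zero] at habs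
        linarith
      have hpos : 0 < E ^ 2 - (z₁ + B) ^ 2 := by nlinarith [hzsq]
      set u₁ := Real.sqrt (A * (E ^ 2 - (z₁ + B) ^ 2)) with hu1def
      have hu1sq : u₁ ^ 2 = A * (E ^ 2 - (z₁ + B) ^ 2) := Real.sq_sqrt (by positivity)
      have hu1pos : 0 < u₁ := Real.sqrt_pos.mpr (by positivity)
      have huv1 : u₁ ^ 2 + 0 ^ 2 ≠ 0 := by nlinarith
      have hEn1 : E ^ 2 = (u₁ ^ 2 + 0 ^ 2) / A + (z₁ + B) ^ 2 := by
        rw [hu1sq]; field_simp; ring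
      have hper2 : ∀ t, magGeo A B u₁ 0 z₁ (t + 2 * π * A / z₁) = magGeo A B u₁ 0 z₁ t := by
        apply (per_iff hA hzne huv1 _).mpr
        constructor
        · have harg : z₁ * (2 * π * A / z₁) / A = 2 * π := by field_simp
          rw [harg]; exact Real.cos_two_pi
        · rw [C_zero hA hzne hzsq hEn1, zero_mul]
      refine ⟨(0, 0, 0), u₁, 0, z₁, 2 * π * A / z₁, hEn1,
        div_ne_zero (by positivity) hzne, fun t => congrArg _ (hper2 t),
        π * A / (2 * z₁), 0, fun hcontra => ?_⟩
      have h := hmul_cancel hcontra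
      have harg : z₁ * (π * A / (2 * z₁)) / A = π / 2 := by field_simp
      simp only [magGeo, if_pos hzne, harg, mul_zero, zero_div, zero_mul, sub_zero,
        Real.sin_zero, Real.cos_zero, Real.sin_pi_div_two, sub_self, mul_one,
        Prod.mk.injEq] at h
      exact (div_ne_zero hu1pos.ne' hzne) h.1
  · intro hEB
    obtain ⟨hrpos, hr2, hzsq, habs, hprod⟩ := zstar_facts hE hEB
    set r := Real.sqrt (B ^ 2 - E ^ 2) with hrdef
    set z₁ := -(Real.sign B) * r with hz1def
    have hzne : z₁ ≠ 0 := by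
      intro h
      rw [h, abs_zero] at habs
      linarith
    have hpos : 0 < E ^ 2 - (z₁ + B) ^ 2 := by nlinarith [hzsq]
    have hB : B ≠ 0 := by
      intro h
      rw [h] at hEB; simp at hEB; linarith
    refine ⟨?_, mul_pos hA hpos, ?_⟩
    · intro u₀ v₀ z₀ hz hne0 hEn
      have huv : u₀ ^ 2 + v₀ ^ 2 ≠ 0 := (sumsq_pos hne0).ne'
      constructor
      · rintro ⟨ω, hω, hper⟩
        obtain ⟨hc, hCω⟩ := (per_iff hA hz huv ω).mp hper
        have hC := (mul_eq_zero.mp hCω).resolve_right hω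
        have hz2 : z₀ ^ 2 = B ^ 2 - E ^ 2 := zsq_of_C hA hz hEn hC
        have h := energy_eq hA hEn
        have hC' := hC
        field_simp at hC'
        have hprod0 : z₀ * (z₀ + B) < 0 := by nlinarith [sumsq_pos hne0]
        exact z_unique hE hrpos hr2 hz2 hprod0
      · intro hz0eq
        have hz0sq : z₀ ^ 2 = B ^ 2 - E ^ 2 := by rw [hz0eq]; exact hzsq
        refine ⟨2 * π * A / z₀, div_ne_zero (by positivity) hz, ?_⟩
        apply (per_iff hA hz huv _).mpr
        constructor
        · have harg : z₀ * (2 * π * A / z₀) / A = 2 * π := by field_simp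
          rw [harg]; exact Real.cos_two_pi
        · rw [C_zero hA hz hz0sq hEn, zero_mul]
    · intro u₀ v₀ huveq
      have huvpos : 0 < u₀ ^ 2 + v₀ ^ 2 := huveq ▸ mul_pos hA hpos
      have hEn : E ^ 2 = (u₀ ^ 2 + v₀ ^ 2) / A + (z₁ + B) ^ 2 := by
        rw [huveq]; field_simp; ring
      constructor
      · refine ⟨by positivity, ?_⟩
        apply (per_iff hA hzne huvpos.ne' _).mpr
        constructor
        · rcases hB.lt_or_gt with hBneg | hBpos
          · have hz1r : z₁ = r := by
              rw [hz1def, Real.sign_of_neg hBneg]; ring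
            have harg : z₁ * (2 * π * A / r) / A = 2 * π := by
              rw [hz1r]; field_simp
            rw [harg]; exact Real.cos_two_pi
          · have hz1r : z₁ = -r := by
              rw [hz1def, Real.sign_of_pos hBpos]; ring
            have harg : z₁ * (2 * π * A / r) / A = -(2 * π) := by
              rw [hz1r]; field_simp
            rw [harg, Real.cos_neg]; exact Real.cos_two_pi
        · rw [C_zero hA hzne hzsq hEn, zero_mul]
      · rintro ω ⟨hωpos, hper⟩
        obtain ⟨hc, -⟩ := (per_iff hA hzne huvpos.ne' ω).mp hper
        obtain ⟨n, hn⟩ := (Real.cos_eq_one_iff _).mp hc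
        have hargne : z₁ * ω / A ≠ 0 := div_ne_zero (mul_ne_zero hzne hωpos.ne') hAne
        have hn0 : n ≠ 0 := by
          rintro rfl
          simp only [Int.cast_zero, zero_mul] at hn
          exact hargne hn.symm
        have h1n : (1 : ℝ) ≤ |(n : ℝ)| := by exact_mod_cast Int.one_le_abs hn0
        have habs2 : |z₁ * ω / A| = r * ω / A := by
          rw [abs_div, abs_mul, habs, abs_of_pos hωpos, abs_of_pos hA]
        have hkey : 2 * π ≤ r * ω / A := by
          have h2pi : (0 : ℝ) < 2 * π := by positivity
          calc 2 * π = 1 * (2 * π) := by ring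
            _ ≤ |(n : ℝ)| * (2 * π) := by
                exact mul_le_mul_of_nonneg_right h1n (by positivity)
            _ = |(n : ℝ) * (2 * π)| := by rw [abs_mul, abs_of_pos h2pi]
            _ = |z₁ * ω / A| := by rw [hn]
            _ = r * ω / A := habs2
        have h2 := (le_div_iff₀ hA).mp hkey
        rw [div_le_iff₀ hrpos]
        linarith
end
end

section
/- Let γ = (x_γ, y_γ, z_γ) ∈ H with (x_γ,y_γ) ≠ (0,0). If the magnetic geodesic σ_{u₀,v₀,z₀} through e is γ-periodic with some period ω ≠ 0, then z₀ = 0 and (u₀,v₀) ≠ (0,0); that is, a noncentral element of H can only translate magnetic geodesics that are noncentral one-parameter subgroups. -/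
open Real

noncomputable section

/-- A bounded function cannot have a nonzero constant increment over a fixed shift. -/
lemma bounded_step_zero (f : ℝ → ℝ) (M c ω : ℝ) (hb : ∀ t, |f t| ≤ M)
    (hs : ∀ t, c + f t = f (t + ω)) : c = 0 := by
  by_contra hc
  have key : ∀ n : ℕ, f (n * ω) = f 0 + n * c := by
    intro n
    induction n with
    | zero => simp
    | succ n ih =>
      have h := hs (n * ω)
      push_cast
      have : ((n : ℝ) + 1) * ω = n * ω + ω := by ring
      rw [this, ← h, ih]; ring
  have hcpos : 0 < |c| := abs_pos.mpr hc
  obtain ⟨n, hn⟩ := exists_nat_gt ((2 * M) / |c|)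
  have h1 : 2 * M < n * |c| := (div_lt_iff₀ hcpos).mp hn
  have h2 : |(n : ℝ) * c| ≤ 2 * M := by
    have heq : (n : ℝ) * c = f (n * ω) - f 0 := by rw [key n]; ring
    rw [heq]
    calc |f (n * ω) - f 0| ≤ |f (n * ω)| + |f 0| := abs_sub _ _
      _ ≤ M + M := add_le_add (hb _) (hb _)
      _ = 2 * M := by ring
  rw [abs_mul, Nat.abs_cast] at h2
  linarith

/-- A noncentral element `γ = (x_γ, y_γ, z_γ)` of the Heisenberg group can only
translate magnetic geodesics through the identity that are noncentral one-parameter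
subgroups: if `σ_{u₀,v₀,z₀}` is `γ`-periodic with period `ω ≠ 0`, then `z₀ = 0` and
`(u₀, v₀) ≠ (0, 0)`. -/
theorem stmt5 (A B : ℝ) (hA : 0 < A) (xγ yγ zγ : ℝ) (hγ : (xγ, yγ) ≠ (0, 0))
    (u₀ v₀ z₀ ω : ℝ) (hω : ω ≠ 0)
    (hper : ∀ t, Hmul (xγ, yγ, zγ) (magGeo A B u₀ v₀ z₀ t) = magGeo A B u₀ v₀ z₀ (t + ω)) :
    z₀ = 0 ∧ (u₀, v₀) ≠ (0, 0) := by
  by_cases hz : z₀ = 0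
  · -- one-parameter subgroup case
    subst hz
    have h0 := hper 0
    simp only [magGeo, Hmul, ne_eq, not_true_eq_false, if_false, ite_false] at h0
    have hx : xγ = u₀ * ω / A := by
      have := congrArg Prod.fst h0
      simp at this
      linarith [this]
    have hy : yγ = v₀ * ω / A := by
      have := congrArg (fun p : H3 => p.2.1) h0
      simp at this
      linarith [this]
    refine ⟨rfl, ?_⟩
    intro h
    have hu : u₀ = 0 := by exact congrArg Prod.fst h
    have hv : v₀ = 0 := by exact congrArg Prod.snd h
    apply hγ
    rw [hx, hy, hu, hv]
    norm_num
  · -- spiraling case: x and y components are bounded, so xγ = yγ = 0, contradiction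
    exfalso
    set x : ℝ → ℝ := fun t =>
      (u₀ / z₀) * Real.sin (z₀ * t / A) - (v₀ / z₀) * (1 - Real.cos (z₀ * t / A)) with hxdef
    set y : ℝ → ℝ := fun t =>
      (u₀ / z₀) * (1 - Real.cos (z₀ * t / A)) + (v₀ / z₀) * Real.sin (z₀ * t / A) with hydef
    have hxs : ∀ t, xγ + x t = x (t + ω) := by
      intro t
      have := congrArg Prod.fst (hper t)
      simpa [Hmul, magGeo, hz, hxdef] using this
    have hys : ∀ t, yγ + y t = y (t + ω) := by
      intro t
      have := congrArg (fun p : H3 => p.2.1) (hper t)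
      simpa [Hmul, magGeo, hz, hydef] using this
    have hbound : ∀ (a b : ℝ) (t : ℝ),
        |a * Real.sin (z₀ * t / A) + b * (1 - Real.cos (z₀ * t / A))| ≤ |a| + 2 * |b| := by
      intro a b t
      calc |a * Real.sin (z₀ * t / A) + b * (1 - Real.cos (z₀ * t / A))|
          ≤ |a * Real.sin (z₀ * t / A)| + |b * (1 - Real.cos (z₀ * t / A))| := abs_add_le _ _
        _ ≤ |a| * 1 + |b| * 2 := by
            rw [abs_mul, abs_mul]
            gcongr
            · exact abs_sin_le_one _
            · rw [abs_le]
              constructor <;> nlinarith [Real.neg_one_le_cos (z₀ * t / A),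
                Real.cos_le_one (z₀ * t / A)]
        _ = |a| + 2 * |b| := by ring
    have hxb : ∀ t, |x t| ≤ |u₀ / z₀| + 2 * |v₀ / z₀| := by
      intro t
      have := hbound (u₀ / z₀) (-(v₀ / z₀)) t
      simp only [abs_neg] at this
      convert this using 2
      ring
    have hyb : ∀ t, |y t| ≤ |v₀ / z₀| + 2 * |u₀ / z₀| := by
      intro t
      have := hbound (v₀ / z₀) (u₀ / z₀) t
      convert this using 2
      ring
    have hxγ : xγ = 0 := bounded_step_zero x _ xγ ω hxb hxs
    have hyγ : yγ = 0 := bounded_step_zero y _ yγ ω hyb hys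
    exact hγ (by rw [hxγ, hyγ])
end
end

section
/- Let γ = (x_γ, y_γ, z_γ) ∈ H with (x_γ,y_γ) ≠ (0,0). (i) For every E > |B| and each choice of sign ε ∈ {+1,−1}, there exist a ∈ H and parameters (u₀,v₀,0) of energy E such that the magnetic geodesic a·σ_{u₀,v₀,0} is γ-periodic with period ω = ε·√(A(x_γ²+y_γ²))/√(E²−B²). (ii) If 0 < E ≤ |B|, then no magnetic geodesic of energy E is γ-periodic. -/
open Real

noncomputable section

/-- If a bounded function satisfies `f (t+ω) = f t + c` then `c = 0`. -/
lemma shift_const_of_bounded {f : ℝ → ℝ} {M c ω : ℝ}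
    (hM : ∀ t, |f t| ≤ M) (h : ∀ t, f (t + ω) = f t + c) : c = 0 := by
  by_contra hc
  have key : ∀ n : ℕ, f ((n : ℝ) * ω) = f 0 + n * c := by
    intro n
    induction n with
    | zero => simp
    | succ n ih =>
      have h1 := h ((n : ℝ) * ω)
      push_cast
      rw [show ((n : ℝ) + 1) * ω = (n : ℝ) * ω + ω by ring, h1, ih]
      ring
  obtain ⟨n, hn⟩ := exists_nat_gt ((2 * M) / |c|)
  have h1 := hM ((n : ℝ) * ω)
  have h2 := hM 0
  rw [key n] at h1
  have h3 : |(n : ℝ) * c| ≤ 2 * M := by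
    have := abs_sub (f 0 + (n : ℝ) * c) (f 0)
    calc |(n : ℝ) * c| = |(f 0 + (n : ℝ) * c) - f 0| := by ring_nf
      _ ≤ |f 0 + (n : ℝ) * c| + |f 0| := abs_sub _ _
      _ ≤ 2 * M := by linarith
  have h4 : 2 * M < (n : ℝ) * |c| := (div_lt_iff₀ (abs_pos.mpr hc)).mp hn
  rw [abs_mul, Nat.abs_cast] at h3
  linarith

set_option maxHeartbeats 1600000 in
/-- Let `γ = (x_γ, y_γ, z_γ)` be noncentral. (i) For every `E > |B|` and each sign
`ε = ±1`, some left translate `a·σ_{u₀,v₀,0}` of a one-parameter-subgroup magnetic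
geodesic of energy `E` is `γ`-periodic with period `ω = ε√(A(x_γ²+y_γ²))/√(E²-B²)`.
(ii) If `0 < E ≤ |B|`, no magnetic geodesic of energy `E` is `γ`-periodic. -/
theorem stmt6 (A B : ℝ) (hA : 0 < A) (xγ yγ zγ : ℝ) (hγ : (xγ, yγ) ≠ (0, 0)) :
    (∀ E : ℝ, |B| < E → ∀ ε : ℝ, (ε = 1 ∨ ε = -1) →
      ∃ (a : H3) (u₀ v₀ : ℝ),
        E ^ 2 = (u₀ ^ 2 + v₀ ^ 2) / A + (0 + B) ^ 2 ∧
        ε * Real.sqrt (A * (xγ ^ 2 + yγ ^ 2)) / Real.sqrt (E ^ 2 - B ^ 2) ≠ 0 ∧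
        (∀ t, Hmul (xγ, yγ, zγ) (Hmul a (magGeo A B u₀ v₀ 0 t))
          = Hmul a (magGeo A B u₀ v₀ 0
              (t + ε * Real.sqrt (A * (xγ ^ 2 + yγ ^ 2)) / Real.sqrt (E ^ 2 - B ^ 2))))) ∧
    (∀ E : ℝ, 0 < E → E ≤ |B| →
      ∀ (a : H3) (u₀ v₀ z₀ ω : ℝ),
        E ^ 2 = (u₀ ^ 2 + v₀ ^ 2) / A + (z₀ + B) ^ 2 → ω ≠ 0 →
        ¬ (∀ t, Hmul (xγ, yγ, zγ) (Hmul a (magGeo A B u₀ v₀ z₀ t))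
            = Hmul a (magGeo A B u₀ v₀ z₀ (t + ω)))) := by
  have hr2 : 0 < xγ ^ 2 + yγ ^ 2 := by
    rcases eq_or_ne xγ 0 with hx | hx
    · rcases eq_or_ne yγ 0 with hy | hy
      · exact absurd (by simp [hx, hy]) hγ
      · positivity
    · positivity
  constructor
  · -- Part (i)
    intro E hE ε hε
    have hB2 : B ^ 2 < E ^ 2 := by nlinarith [sq_abs B, abs_nonneg B]
    have hDpos : 0 < E ^ 2 - B ^ 2 := by linarith
    have hε2 : ε ^ 2 = 1 := by rcases hε with h | h <;> rw [h] <;> norm_num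
    have hεne : ε ≠ 0 := by rcases hε with h | h <;> rw [h] <;> norm_num
    set ω := ε * Real.sqrt (A * (xγ ^ 2 + yγ ^ 2)) / Real.sqrt (E ^ 2 - B ^ 2) with hωdef
    have hs1 : (0 : ℝ) < Real.sqrt (A * (xγ ^ 2 + yγ ^ 2)) := Real.sqrt_pos.mpr (by positivity)
    have hs2 : (0 : ℝ) < Real.sqrt (E ^ 2 - B ^ 2) := Real.sqrt_pos.mpr hDpos
    have hω : ω ≠ 0 := div_ne_zero (mul_ne_zero hεne hs1.ne') hs2.ne'
    have hω2 : ω ^ 2 = A * (xγ ^ 2 + yγ ^ 2) / (E ^ 2 - B ^ 2) := by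
      rw [hωdef, div_pow, mul_pow, hε2, one_mul, Real.sq_sqrt (by positivity),
        Real.sq_sqrt hDpos.le]
    refine ⟨((zγ - B * ω) * yγ / (xγ ^ 2 + yγ ^ 2),
             -((zγ - B * ω) * xγ) / (xγ ^ 2 + yγ ^ 2), 0),
            A / ω * xγ, A / ω * yγ, ?_, hω, ?_⟩
    · have h1 : (A / ω * xγ) ^ 2 + (A / ω * yγ) ^ 2 = A ^ 2 * (xγ ^ 2 + yγ ^ 2) / ω ^ 2 := by
        ring
      rw [h1, hω2]
      field_simp
      ring
    · intro t
      simp only [magGeo, ne_eq, not_true_eq_false, if_false, Hmul, Prod.mk.injEq]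
      refine ⟨?_, ?_, ?_⟩
      · field_simp
        ring
      · field_simp
        ring
      · field_simp
        ring
  · -- Part (ii)
    intro E hE hEB a u₀ v₀ z₀ ω hEn hω hper
    have hB2 : E ^ 2 ≤ B ^ 2 := by nlinarith [sq_abs B, abs_nonneg B]
    have hx : ∀ t, (magGeo A B u₀ v₀ z₀ (t + ω)).1 = (magGeo A B u₀ v₀ z₀ t).1 + xγ := by
      intro t
      have h := congrArg Prod.fst (hper t)
      simp only [Hmul] at h
      linarith
    have hy : ∀ t, (magGeo A B u₀ v₀ z₀ (t + ω)).2.1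
        = (magGeo A B u₀ v₀ z₀ t).2.1 + yγ := by
      intro t
      have h := congrArg (fun p : H3 => p.2.1) (hper t)
      simp only [Hmul] at h
      linarith
    rcases eq_or_ne z₀ 0 with hz | hz
    · subst hz
      have hsum : u₀ ^ 2 + v₀ ^ 2 ≤ 0 := by
        have hq : (u₀ ^ 2 + v₀ ^ 2) / A ≤ 0 := by nlinarith
        have h' : u₀ ^ 2 + v₀ ^ 2 = A * ((u₀ ^ 2 + v₀ ^ 2) / A) := by field_simp
        nlinarith
      have hu : u₀ = 0 := by nlinarith [sq_nonneg u₀, sq_nonneg v₀]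
      have hv : v₀ = 0 := by nlinarith [sq_nonneg u₀, sq_nonneg v₀]
      have h1 := hx 0
      have h2 := hy 0
      simp only [magGeo, ne_eq, not_true_eq_false, if_false, hu, hv, zero_mul, zero_div] at h1 h2
      have hx0 : xγ = 0 := by linarith
      have hy0 : yγ = 0 := by linarith
      exact hγ (by simp [hx0, hy0])
    · have hbx : ∀ t, |(magGeo A B u₀ v₀ z₀ t).1| ≤ |u₀ / z₀| + 2 * |v₀ / z₀| := by
        intro t
        simp only [magGeo, if_pos hz]
        have h1 : |Real.sin (z₀ * t / A)| ≤ 1 := abs_sin_le_one _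
        have h2 : |1 - Real.cos (z₀ * t / A)| ≤ 2 := by
          have := Real.neg_one_le_cos (z₀ * t / A)
          have := Real.cos_le_one (z₀ * t / A)
          rw [abs_le]; constructor <;> linarith
        calc |u₀ / z₀ * Real.sin (z₀ * t / A) - v₀ / z₀ * (1 - Real.cos (z₀ * t / A))|
            ≤ |u₀ / z₀ * Real.sin (z₀ * t / A)| + |v₀ / z₀ * (1 - Real.cos (z₀ * t / A))| :=
              abs_sub _ _
          _ ≤ |u₀ / z₀| + 2 * |v₀ / z₀| := by
              rw [abs_mul, abs_mul]
              have ha := abs_nonneg (u₀ / z₀)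
              have hb := abs_nonneg (v₀ / z₀)
              nlinarith
      have hby : ∀ t, |(magGeo A B u₀ v₀ z₀ t).2.1| ≤ 2 * |u₀ / z₀| + |v₀ / z₀| := by
        intro t
        simp only [magGeo, if_pos hz]
        have h1 : |Real.sin (z₀ * t / A)| ≤ 1 := abs_sin_le_one _
        have h2 : |1 - Real.cos (z₀ * t / A)| ≤ 2 := by
          have := Real.neg_one_le_cos (z₀ * t / A)
          have := Real.cos_le_one (z₀ * t / A)
          rw [abs_le]; constructor <;> linarith
        calc |u₀ / z₀ * (1 - Real.cos (z₀ * t / A)) + v₀ / z₀ * Real.sin (z₀ * t / A)|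
            ≤ |u₀ / z₀ * (1 - Real.cos (z₀ * t / A))| + |v₀ / z₀ * Real.sin (z₀ * t / A)| :=
              abs_add_le _ _
          _ ≤ 2 * |u₀ / z₀| + |v₀ / z₀| := by
              rw [abs_mul, abs_mul]
              have ha := abs_nonneg (u₀ / z₀)
              have hb := abs_nonneg (v₀ / z₀)
              nlinarith
      have hxz : xγ = 0 := shift_const_of_bounded hbx hx
      have hyz : yγ = 0 := shift_const_of_bounded hby hy
      exact hγ (by simp [hxz, hyz])
end
end

section
/- Let γ = (0,0,z_γ) ∈ H with z_γ ≠ 0. (i) If a magnetic geodesic σ_{u₀,v₀,z₀} through e that is a one-parameter subgroup (i.e. z₀ = 0 or (u₀,v₀) = (0,0)) is γ-periodic with some period ω ≠ 0, then u₀ = v₀ = 0 and z₀ + B ≠ 0, so that σ_{u₀,v₀,z₀}(t) = (0,0,(z₀+B)t). (ii) For every E > 0 and each sign ε ∈ {+1,−1}, the curve t ↦ (0,0,εEt) (namely σ_{0,0,εE−B}) is a magnetic geodesic of energy E that is γ-periodic with period ω = z_γ/(εE). -/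
open Real

noncomputable section

lemma magGeo_central (A B z₀ t : ℝ) : magGeo A B 0 0 z₀ t = (0, 0, (z₀ + B) * t) := by
  unfold magGeo
  split
  · simp only [Prod.mk.injEq]
    refine ⟨by ring, by ring, by ring⟩
  · rename_i h
    push_neg at h
    simp [h]

/-- Let `γ = (0,0,z_γ)` be central, `z_γ ≠ 0`. (i) Any one-parameter-subgroup magnetic
geodesic through `e` that is `γ`-periodic must be central: `u₀ = v₀ = 0`, `z₀ + B ≠ 0`,
and the geodesic is `t ↦ (0,0,(z₀+B)t)`. (ii) For every `E > 0` and sign `ε = ±1`,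
the curve `t ↦ (0,0,εEt)` (namely `σ_{0,0,εE-B}`) is a magnetic geodesic of energy `E`
that is `γ`-periodic with period `z_γ/(εE)`. -/
theorem stmt7 (A B : ℝ) (hA : 0 < A) (zγ : ℝ) (hzγ : zγ ≠ 0) :
    (∀ u₀ v₀ z₀ ω : ℝ, (z₀ = 0 ∨ (u₀ = 0 ∧ v₀ = 0)) → ω ≠ 0 →
      (∀ t, Hmul (0, 0, zγ) (magGeo A B u₀ v₀ z₀ t) = magGeo A B u₀ v₀ z₀ (t + ω)) →
      u₀ = 0 ∧ v₀ = 0 ∧ z₀ + B ≠ 0 ∧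
        (∀ t, magGeo A B u₀ v₀ z₀ t = (0, 0, (z₀ + B) * t))) ∧
    (∀ E : ℝ, 0 < E → ∀ ε : ℝ, (ε = 1 ∨ ε = -1) →
      E ^ 2 = (0 ^ 2 + 0 ^ 2) / A + ((ε * E - B) + B) ^ 2 ∧
      (∀ t, magGeo A B 0 0 (ε * E - B) t = (0, 0, ε * E * t)) ∧
      zγ / (ε * E) ≠ 0 ∧
      (∀ t, Hmul (0, 0, zγ) (magGeo A B 0 0 (ε * E - B) t)
        = magGeo A B 0 0 (ε * E - B) (t + zγ / (ε * E)))) := by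
  have hA' : A ≠ 0 := ne_of_gt hA
  constructor
  · intro u₀ v₀ z₀ ω hcase hω hper
    rcases hcase with hz0 | ⟨hu, hv⟩
    · -- z₀ = 0
      subst hz0
      have h0 := hper 0
      simp only [magGeo, Hmul, if_neg (not_ne_iff.mpr rfl)] at h0
      simp only [Prod.mk.injEq] at h0
      obtain ⟨h1, h2, h3⟩ := h0
      have hu : u₀ = 0 := by
        field_simp at h1
        rcases mul_eq_zero.mp (by linear_combination -h1 : u₀ * ω = 0) with h | h
        · exact h
        · exact absurd h hω
      have hv : v₀ = 0 := by
        field_simp at h2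
        rcases mul_eq_zero.mp (by linear_combination -h2 : v₀ * ω = 0) with h | h
        · exact h
        · exact absurd h hω
      have hB : B ≠ 0 := by
        intro hB0
        rw [hB0] at h3
        simp at h3
        apply hzγ
        linarith
      subst hu; subst hv
      exact ⟨rfl, rfl, by simpa using hB, fun t => by simpa using magGeo_central A B 0 t⟩
    · subst hu; subst hv
      have h0 := hper 0
      rw [magGeo_central, magGeo_central] at h0
      simp only [Hmul, Prod.mk.injEq] at h0
      have h3 : zγ = (z₀ + B) * ω := by
        have := h0.2.2
        rw [zero_add] at this
        rw [← this]
        ring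
      have hzB : z₀ + B ≠ 0 := by
        intro h
        rw [h, zero_mul] at h3
        exact hzγ h3
      exact ⟨rfl, rfl, hzB, fun t => magGeo_central A B z₀ t⟩
  · intro E hE ε hε
    have hεE : ε * E ≠ 0 := by
      rcases hε with h | h <;> subst h <;> simp [ne_of_gt hE]
    have hcurve : ∀ t, magGeo A B 0 0 (ε * E - B) t = (0, 0, ε * E * t) := by
      intro t
      rw [magGeo_central]
      ring_nf
    refine ⟨?_, hcurve, div_ne_zero hzγ hεE, ?_⟩
    · have hε2 : ε ^ 2 = 1 := by rcases hε with h | h <;> subst h <;> ring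
      field_simp
      linear_combination (-A * E ^ 2) * hε2
    · intro t
      rw [hcurve, hcurve]
      simp only [Hmul, Prod.mk.injEq]
      refine ⟨by ring, by ring, ?_⟩
      field_simp
      linear_combination (-2 * zγ) * mul_inv_cancel₀ (left_ne_zero_of_mul hεE)
end
end

section
/- Let γ = (0,0,z_γ) ∈ H with z_γ ≠ 0, and let E > |B|. A spiraling magnetic geodesic σ_{u₀,v₀,z₀} through e of energy E is γ-periodic with some period if and only if there exists ℓ ∈ ℤ, ℓ ≠ 0, such that either (a) 2E/(E+B) < z_γ/(πAℓ) and z₀ = −√((E²−B²)/(z_γ/(πAℓ) − 1)), or (b) 2E/(E−B) < z_γ/(πAℓ) and z₀ = +√((E²−B²)/(z_γ/(πAℓ) − 1)); in either case ω = 2πAℓ/z₀ is a period. Moreover, for each such ℓ and z₀, every pair (u₀,v₀) with u₀²+v₀² = A(E² − (z₀+B)²) yields a spiraling γ-periodic magnetic geodesic of energy E with period 2πAℓ/z₀. -/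
open Real

noncomputable section

lemma magGeo_per (A B u₀ v₀ z₀ zγ ω : ℝ) (ℓ : ℤ) (hz : z₀ ≠ 0)
    (h1 : z₀ * ω / A = (ℓ : ℝ) * (2 * π))
    (h2 : (z₀ + B + (u₀ ^ 2 + v₀ ^ 2) / (2 * A * z₀)) * ω = zγ) :
    ∀ t, Hmul (0, 0, zγ) (magGeo A B u₀ v₀ z₀ t) = magGeo A B u₀ v₀ z₀ (t + ω) := by
  intro t
  have key : z₀ * (t + ω) / A = z₀ * t / A + (ℓ : ℝ) * (2 * π) := by
    rw [← h1]; ring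
  simp only [magGeo, Hmul, if_pos hz, key, Real.sin_add_int_mul_two_pi,
    Real.cos_add_int_mul_two_pi, Prod.mk.injEq]
  refine ⟨by ring, by ring, by linear_combination -h2⟩

set_option maxHeartbeats 1000000 in
lemma aux_facts (A B zγ E : ℝ) (hA : 0 < A) (hE : |B| < E) (ℓ : ℤ) (hℓ : ℓ ≠ 0) (z₀ : ℝ)
    (hcase : (2 * E / (E + B) < zγ / (π * A * (ℓ : ℝ)) ∧
          z₀ = -Real.sqrt ((E ^ 2 - B ^ 2) / (zγ / (π * A * (ℓ : ℝ)) - 1))) ∨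
       (2 * E / (E - B) < zγ / (π * A * (ℓ : ℝ)) ∧
          z₀ = Real.sqrt ((E ^ 2 - B ^ 2) / (zγ / (π * A * (ℓ : ℝ)) - 1)))) :
    z₀ ≠ 0 ∧ (z₀ + B) ^ 2 < E ^ 2 ∧
      zγ * z₀ ^ 2 = π * A * (ℓ : ℝ) * (E ^ 2 + z₀ ^ 2 - B ^ 2) := by
  obtain ⟨hB1, hB2⟩ := abs_lt.mp hE
  have hEB1 : 0 < E + B := by linarith
  have hEB2 : 0 < E - B := by linarith
  have hE2 : B ^ 2 < E ^ 2 := by nlinarith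
  have hπ := Real.pi_pos
  have hℓR : (ℓ : ℝ) ≠ 0 := Int.cast_ne_zero.mpr hℓ
  have hπAℓ : π * A * (ℓ : ℝ) ≠ 0 := by positivity
  have main : ∀ z : ℝ, z ^ 2 = (E ^ 2 - B ^ 2) / (zγ / (π * A * (ℓ : ℝ)) - 1) →
      zγ / (π * A * (ℓ : ℝ)) - 1 ≠ 0 →
      zγ * z ^ 2 = π * A * (ℓ : ℝ) * (E ^ 2 + z ^ 2 - B ^ 2) := by
    intro z h hne
    have h2 : z ^ 2 * (zγ / (π * A * (ℓ : ℝ)) - 1) = E ^ 2 - B ^ 2 := by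
      rw [h, div_mul_cancel₀ _ hne]
    have h3 : z ^ 2 * (zγ / (π * A * (ℓ : ℝ))) = E ^ 2 - B ^ 2 + z ^ 2 := by
      linarith [h2, mul_sub (z ^ 2) (zγ / (π * A * (ℓ : ℝ))) 1]
    rw [mul_div_assoc'] at h3
    have h4 := (div_eq_iff hπAℓ).mp h3
    linear_combination h4
  rcases hcase with ⟨hlt, hz0⟩ | ⟨hlt, hz0⟩
  · have hid : 2 * E / (E + B) = 1 + (E - B) / (E + B) := by field_simp; ring
    have hD2 : (E - B) / (E + B) < zγ / (π * A * (ℓ : ℝ)) - 1 := by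
      rw [hid] at hlt; linarith
    have hD : 0 < zγ / (π * A * (ℓ : ℝ)) - 1 := lt_trans (div_pos hEB2 hEB1) hD2
    have harg : 0 < (E ^ 2 - B ^ 2) / (zγ / (π * A * (ℓ : ℝ)) - 1) :=
      div_pos (by nlinarith) hD
    have hs : 0 < Real.sqrt ((E ^ 2 - B ^ 2) / (zγ / (π * A * (ℓ : ℝ)) - 1)) :=
      Real.sqrt_pos.mpr harg
    have hs2 : (Real.sqrt ((E ^ 2 - B ^ 2) / (zγ / (π * A * (ℓ : ℝ)) - 1))) ^ 2
        = (E ^ 2 - B ^ 2) / (zγ / (π * A * (ℓ : ℝ)) - 1) := Real.sq_sqrt harg.le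
    have hz2 : z₀ ^ 2 = (E ^ 2 - B ^ 2) / (zγ / (π * A * (ℓ : ℝ)) - 1) := by
      rw [hz0, neg_sq]; exact hs2
    have hz2D : z₀ ^ 2 * (zγ / (π * A * (ℓ : ℝ)) - 1) = E ^ 2 - B ^ 2 := by
      rw [hz2, div_mul_cancel₀ _ hD.ne']
    have hz2pos : 0 < z₀ ^ 2 := by rw [hz2]; exact harg
    have hzneg : z₀ < 0 := by rw [hz0]; linarith
    have hdiv : E - B < (zγ / (π * A * (ℓ : ℝ)) - 1) * (E + B) := (div_lt_iff₀ hEB1).mp hD2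
    have hslt : z₀ ^ 2 < (E + B) ^ 2 := by
      nlinarith [mul_lt_mul_of_pos_left hdiv hz2pos, congrArg (· * (E + B)) hz2D, hEB1, hEB2]
    have hsEB : -z₀ < E + B := by
      nlinarith [hslt, hEB1, mul_pos (show (0:ℝ) < E + B - z₀ by linarith) hEB1]
    have hsp : (z₀ + B) ^ 2 < E ^ 2 := by
      have h1 : -E < z₀ + B := by linarith
      have h2 : z₀ + B < E := by linarith
      nlinarith
    exact ⟨hzneg.ne, hsp, main z₀ hz2 hD.ne'⟩
  · have hid : 2 * E / (E - B) = 1 + (E + B) / (E - B) := by field_simp; ring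
    have hD2 : (E + B) / (E - B) < zγ / (π * A * (ℓ : ℝ)) - 1 := by
      rw [hid] at hlt; linarith
    have hD : 0 < zγ / (π * A * (ℓ : ℝ)) - 1 := lt_trans (div_pos hEB1 hEB2) hD2
    have harg : 0 < (E ^ 2 - B ^ 2) / (zγ / (π * A * (ℓ : ℝ)) - 1) :=
      div_pos (by nlinarith) hD
    have hs : 0 < Real.sqrt ((E ^ 2 - B ^ 2) / (zγ / (π * A * (ℓ : ℝ)) - 1)) :=
      Real.sqrt_pos.mpr harg
    have hs2 : (Real.sqrt ((E ^ 2 - B ^ 2) / (zγ / (π * A * (ℓ : ℝ)) - 1))) ^ 2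
        = (E ^ 2 - B ^ 2) / (zγ / (π * A * (ℓ : ℝ)) - 1) := Real.sq_sqrt harg.le
    have hz2 : z₀ ^ 2 = (E ^ 2 - B ^ 2) / (zγ / (π * A * (ℓ : ℝ)) - 1) := by
      rw [hz0]; exact hs2
    have hz2D : z₀ ^ 2 * (zγ / (π * A * (ℓ : ℝ)) - 1) = E ^ 2 - B ^ 2 := by
      rw [hz2, div_mul_cancel₀ _ hD.ne']
    have hz2pos : 0 < z₀ ^ 2 := by rw [hz2]; exact harg
    have hzpos : 0 < z₀ := by rw [hz0]; exact hs
    have hdiv : E + B < (zγ / (π * A * (ℓ : ℝ)) - 1) * (E - B) := (div_lt_iff₀ hEB2).mp hD2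
    have hslt : z₀ ^ 2 < (E - B) ^ 2 := by
      nlinarith [mul_lt_mul_of_pos_left hdiv hz2pos, congrArg (· * (E - B)) hz2D, hEB1, hEB2]
    have hsEB : z₀ < E - B := by
      nlinarith [hslt, hEB2, mul_pos (show (0:ℝ) < E - B + z₀ by linarith) hEB2]
    have hsp : (z₀ + B) ^ 2 < E ^ 2 := by
      have h1 : -E < z₀ + B := by linarith
      have h2 : z₀ + B < E := by linarith
      nlinarith
    exact ⟨hzpos.ne', hsp, main z₀ hz2 hD.ne'⟩

lemma aux_per2 (A B zγ E u₀ v₀ z₀ : ℝ) (hA : 0 < A) (ℓ : ℤ) (hz : z₀ ≠ 0)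
    (huv : u₀ ^ 2 + v₀ ^ 2 = A * (E ^ 2 - (z₀ + B) ^ 2))
    (hzγeq : zγ * z₀ ^ 2 = π * A * (ℓ : ℝ) * (E ^ 2 + z₀ ^ 2 - B ^ 2)) :
    ∀ t, Hmul (0, 0, zγ) (magGeo A B u₀ v₀ z₀ t)
      = magGeo A B u₀ v₀ z₀ (t + 2 * π * A * (ℓ : ℝ) / z₀) := by
  apply magGeo_per A B u₀ v₀ z₀ zγ _ ℓ hz
  · field_simp
  · have hC2 : z₀ + B + (u₀ ^ 2 + v₀ ^ 2) / (2 * A * z₀)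
        = (E ^ 2 + z₀ ^ 2 - B ^ 2) / (2 * z₀) := by
      rw [huv]; field_simp; ring
    rw [hC2]
    field_simp
    linear_combination -hzγeq

set_option maxHeartbeats 1000000 in
/-- Central element `γ = (0,0,z_γ)`, `z_γ ≠ 0`, energy `E > |B|`: a spiraling magnetic
geodesic `σ_{u₀,v₀,z₀}` through `e` of energy `E` is `γ`-periodic for some period iff
there is a nonzero integer `ℓ` with either
`2E/(E+B) < z_γ/(πAℓ)` and `z₀ = -√((E²-B²)/(z_γ/(πAℓ) - 1))`, or
`2E/(E-B) < z_γ/(πAℓ)` and `z₀ = +√((E²-B²)/(z_γ/(πAℓ) - 1))`;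
in either case `ω = 2πAℓ/z₀` is a period, and every `(u₀,v₀)` with
`u₀²+v₀² = A(E² - (z₀+B)²)` yields such a spiraling `γ`-periodic geodesic. -/
theorem stmt8 (A B zγ E : ℝ) (hA : 0 < A) (hzγ : zγ ≠ 0) (hE : |B| < E) :
    (∀ u₀ v₀ z₀ : ℝ, z₀ ≠ 0 → (u₀, v₀) ≠ (0, 0) →
        E ^ 2 = (u₀ ^ 2 + v₀ ^ 2) / A + (z₀ + B) ^ 2 →
      ((∃ ω : ℝ, ω ≠ 0 ∧
          ∀ t, Hmul (0, 0, zγ) (magGeo A B u₀ v₀ z₀ t) = magGeo A B u₀ v₀ z₀ (t + ω))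
        ↔ ∃ ℓ : ℤ, ℓ ≠ 0 ∧
            ((2 * E / (E + B) < zγ / (π * A * (ℓ : ℝ)) ∧
                z₀ = -Real.sqrt ((E ^ 2 - B ^ 2) / (zγ / (π * A * (ℓ : ℝ)) - 1))) ∨
             (2 * E / (E - B) < zγ / (π * A * (ℓ : ℝ)) ∧
                z₀ = Real.sqrt ((E ^ 2 - B ^ 2) / (zγ / (π * A * (ℓ : ℝ)) - 1)))))) ∧
    (∀ ℓ : ℤ, ℓ ≠ 0 → ∀ z₀ : ℝ,
      ((2 * E / (E + B) < zγ / (π * A * (ℓ : ℝ)) ∧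
          z₀ = -Real.sqrt ((E ^ 2 - B ^ 2) / (zγ / (π * A * (ℓ : ℝ)) - 1))) ∨
       (2 * E / (E - B) < zγ / (π * A * (ℓ : ℝ)) ∧
          z₀ = Real.sqrt ((E ^ 2 - B ^ 2) / (zγ / (π * A * (ℓ : ℝ)) - 1)))) →
      ∀ u₀ v₀ : ℝ, u₀ ^ 2 + v₀ ^ 2 = A * (E ^ 2 - (z₀ + B) ^ 2) →
        z₀ ≠ 0 ∧ (u₀, v₀) ≠ (0, 0) ∧
        E ^ 2 = (u₀ ^ 2 + v₀ ^ 2) / A + (z₀ + B) ^ 2 ∧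
        2 * π * A * (ℓ : ℝ) / z₀ ≠ 0 ∧
        (∀ t, Hmul (0, 0, zγ) (magGeo A B u₀ v₀ z₀ t)
          = magGeo A B u₀ v₀ z₀ (t + 2 * π * A * (ℓ : ℝ) / z₀))) := by
  obtain ⟨hB1, hB2⟩ := abs_lt.mp hE
  have hEpos : 0 < E := lt_of_le_of_lt (abs_nonneg B) hE
  have hEB1 : 0 < E + B := by linarith
  have hEB2 : 0 < E - B := by linarith
  have hE2 : B ^ 2 < E ^ 2 := by nlinarith
  have hπ := Real.pi_pos
  have hA' : A ≠ 0 := hA.ne'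
  constructor
  · intro u₀ v₀ z₀ hz hne hEn
    have huv : u₀ ^ 2 + v₀ ^ 2 = A * (E ^ 2 - (z₀ + B) ^ 2) := by
      field_simp at hEn; linarith
    have huvpos : 0 < u₀ ^ 2 + v₀ ^ 2 := by
      rcases eq_or_ne u₀ 0 with hu | hu
      · rcases eq_or_ne v₀ 0 with hv | hv
        · exact absurd (by rw [hu, hv]) hne
        · positivity
      · positivity
    have hzB : (z₀ + B) ^ 2 < E ^ 2 := by nlinarith
    constructor
    · rintro ⟨ω, hω, hper⟩
      simp only [Hmul, magGeo, if_pos hz, Prod.mk.injEq, zero_add, zero_mul, mul_zero,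
        sub_zero, zero_div, add_zero] at hper
      have hsin : ∀ t, Real.sin (z₀ * (t + ω) / A) = Real.sin (z₀ * t / A) := by
        intro t
        obtain ⟨h1, h2, h3⟩ := hper t
        have key : (u₀ ^ 2 + v₀ ^ 2) * (Real.sin (z₀ * (t + ω) / A)
            - Real.sin (z₀ * t / A)) = 0 := by
          field_simp at h1 h2
          linear_combination -(u₀ * h1) - v₀ * h2
        have := (mul_eq_zero.mp key).resolve_left huvpos.ne'
        linarith [sub_eq_zero.mp this]
      have hcos : ∀ t, Real.cos (z₀ * (t + ω) / A) = Real.cos (z₀ * t / A) := by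
        intro t
        obtain ⟨h1, h2, h3⟩ := hper t
        have key : (u₀ ^ 2 + v₀ ^ 2) * (Real.cos (z₀ * (t + ω) / A)
            - Real.cos (z₀ * t / A)) = 0 := by
          field_simp at h1 h2
          linear_combination u₀ * h2 - v₀ * h1
        have := (mul_eq_zero.mp key).resolve_left huvpos.ne'
        linarith [sub_eq_zero.mp this]
      have hcosω : Real.cos (z₀ * ω / A) = 1 := by
        have h := hcos 0
        simpa using h
      obtain ⟨ℓ, hℓeq⟩ := (Real.cos_eq_one_iff _).mp hcosω
      have hℓ0 : ℓ ≠ 0 := by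
        rintro rfl
        simp only [Int.cast_zero, zero_mul] at hℓeq
        exact (div_ne_zero (mul_ne_zero hz hω) hA') hℓeq.symm
      have hℓR : (ℓ : ℝ) ≠ 0 := Int.cast_ne_zero.mpr hℓ0
      have hπAℓ : π * A * (ℓ : ℝ) ≠ 0 := by
        refine mul_ne_zero (mul_ne_zero hπ.ne' hA') hℓR
      have hsinω : Real.sin (z₀ * ω / A) = 0 := by
        rw [← hℓeq]
        have h := Real.sin_int_mul_pi (2 * ℓ)
        rw [show ((2 * ℓ : ℤ) : ℝ) * π = (ℓ : ℝ) * (2 * π) by push_cast; ring] at h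
        exact h
      have h3 := (hper 0).2.2
      simp only [zero_add, mul_zero, zero_div, Real.sin_zero, sub_zero, add_zero] at h3
      rw [hsinω] at h3
      -- h3 : zγ + ... = C * ω - K * 0
      have hCω : (z₀ + B + (u₀ ^ 2 + v₀ ^ 2) / (2 * A * z₀)) * ω = zγ := by linarith
      have hωeq : ω = 2 * π * A * (ℓ : ℝ) / z₀ := by
        rw [eq_div_iff hz]
        field_simp at hℓeq
        linarith
      have hzγeq : zγ * z₀ ^ 2 = π * A * (ℓ : ℝ) * (E ^ 2 + z₀ ^ 2 - B ^ 2) := by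
        have hC2 : z₀ + B + (u₀ ^ 2 + v₀ ^ 2) / (2 * A * z₀)
            = (E ^ 2 + z₀ ^ 2 - B ^ 2) / (2 * z₀) := by
          rw [huv]; field_simp; ring
        rw [hC2, hωeq] at hCω
        field_simp at hCω
        linarith
      have hz2pos : 0 < z₀ ^ 2 := by positivity
      have hQ1 : zγ / (π * A * (ℓ : ℝ)) - 1 = (E ^ 2 - B ^ 2) / z₀ ^ 2 := by
        rw [div_sub_one hπAℓ, div_eq_div_iff hπAℓ hz2pos.ne']
        linear_combination hzγeq
      have harg : (E ^ 2 - B ^ 2) / (zγ / (π * A * (ℓ : ℝ)) - 1) = z₀ ^ 2 := by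
        rw [hQ1, div_div_eq_mul_div]
        exact mul_div_cancel_left₀ _ (by nlinarith)
      refine ⟨ℓ, hℓ0, ?_⟩
      rcases lt_trichotomy z₀ 0 with hneg | hzero | hpos
      · left
        constructor
        · have hid : 2 * E / (E + B) = 1 + (E - B) / (E + B) := by field_simp; ring
          have hb1 : -E < z₀ + B := by nlinarith [hzB, sq_nonneg (z₀ + B + E), hEpos]
          have h5 : z₀ ^ 2 < (E + B) ^ 2 := by
            nlinarith [mul_pos (show (0:ℝ) < E + B - z₀ by linarith)
              (show (0:ℝ) < E + B + z₀ by linarith)]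
          have h6 : (E - B) * z₀ ^ 2 < (E ^ 2 - B ^ 2) * (E + B) := by
            nlinarith [mul_lt_mul_of_pos_left h5 hEB2]
          have h7 : (E - B) / (E + B) < (E ^ 2 - B ^ 2) / z₀ ^ 2 := by
            rw [div_lt_div_iff₀ hEB1 hz2pos]; linarith
          rw [hid]
          linarith [hQ1]
        · rw [harg, show z₀ ^ 2 = (-z₀) ^ 2 by ring, Real.sqrt_sq (by linarith)]
          ring
      · exact absurd hzero hz
      · right
        constructor
        · have hid : 2 * E / (E - B) = 1 + (E + B) / (E - B) := by field_simp; ring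
          have hb2 : z₀ + B < E := by nlinarith [hzB, sq_nonneg (z₀ + B - E), hEpos]
          have h5 : z₀ ^ 2 < (E - B) ^ 2 := by
            nlinarith [mul_pos (show (0:ℝ) < E - B - z₀ by linarith)
              (show (0:ℝ) < E - B + z₀ by linarith)]
          have h6 : (E + B) * z₀ ^ 2 < (E ^ 2 - B ^ 2) * (E - B) := by
            nlinarith [mul_lt_mul_of_pos_left h5 hEB1]
          have h7 : (E + B) / (E - B) < (E ^ 2 - B ^ 2) / z₀ ^ 2 := by
            rw [div_lt_div_iff₀ hEB2 hz2pos]; linarith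
          rw [hid]
          linarith [hQ1]
        · rw [harg, Real.sqrt_sq hpos.le]
    · rintro ⟨ℓ, hℓ, hcase⟩
      obtain ⟨hz', hsp, hzγeq⟩ := aux_facts A B zγ E hA hE ℓ hℓ z₀ hcase
      refine ⟨2 * π * A * (ℓ : ℝ) / z₀, ?_, aux_per2 A B zγ E u₀ v₀ z₀ hA ℓ hz huv hzγeq⟩
      have hℓR : (ℓ : ℝ) ≠ 0 := Int.cast_ne_zero.mpr hℓ
      exact div_ne_zero (by positivity) hz
  · intro ℓ hℓ z₀ hcase u₀ v₀ huv
    obtain ⟨hz, hsp, hzγeq⟩ := aux_facts A B zγ E hA hE ℓ hℓ z₀ hcase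
    have huvpos : 0 < u₀ ^ 2 + v₀ ^ 2 := by rw [huv]; nlinarith
    have hℓR : (ℓ : ℝ) ≠ 0 := Int.cast_ne_zero.mpr hℓ
    refine ⟨hz, ?_, ?_, ?_, aux_per2 A B zγ E u₀ v₀ z₀ hA ℓ hz huv hzγeq⟩
    · intro h
      rw [Prod.mk.injEq] at h
      rw [h.1, h.2] at huvpos
      norm_num at huvpos
    · rw [huv]; field_simp; ring
    · exact div_ne_zero (by positivity) hz
end
end

section
/- Let γ = (0,0,z_γ) ∈ H with z_γ ≠ 0, and let 0 < E < |B| (so B ≠ 0). A spiraling magnetic geodesic σ_{u₀,v₀,z₀} through e of energy E is γ-periodic with some period if and only if there exists ℓ ∈ ℤ, ℓ ≠ 0, such that 2E/(E−|B|) < z_γ/(πAℓ) < 2E/(E+|B|) and z₀ = −sgn(B)·√((E²−B²)/(z_γ/(πAℓ) − 1)); in that case ω = 2πAℓ/z₀ is a period. Moreover, for each such ℓ and z₀, every pair (u₀,v₀) with u₀²+v₀² = A(E² − (z₀+B)²) yields a spiraling γ-periodic magnetic geodesic of energy E with period 2πAℓ/z₀. -/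
open Real

noncomputable section

lemma ineqs (E b z X : ℝ) (hE0 : 0 < E) (hEb : E < b)
    (lo : (b - E) ^ 2 < z ^ 2) (hi : z ^ 2 < (b + E) ^ 2) (hz2 : 0 < z ^ 2)
    (hX : X = (z ^ 2 + E ^ 2 - b ^ 2) / z ^ 2) :
    2 * E / (E - b) < X ∧ X < 2 * E / (E + b) := by
  subst hX
  constructor
  · rw [div_lt_iff_of_neg (by linarith), div_mul_eq_mul_div, div_lt_iff₀ hz2]
    nlinarith [mul_pos (show (0:ℝ) < E + b by linarith) (sub_pos.mpr lo)]
  · rw [lt_div_iff₀ (by linarith), div_mul_eq_mul_div, div_lt_iff₀ hz2]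
    nlinarith [mul_pos (show (0:ℝ) < b - E by linarith) (sub_pos.mpr hi)]

lemma hK_periodic (A B u₀ v₀ z₀ zγ : ℝ) (hA : 0 < A) (hz : z₀ ≠ 0) (ℓ : ℤ)
    (hK : (z₀ + B + (u₀ ^ 2 + v₀ ^ 2) / (2 * A * z₀)) * (2 * π * A * (ℓ:ℝ) / z₀) = zγ) :
    ∀ t, Hmul (0, 0, zγ) (magGeo A B u₀ v₀ z₀ t)
      = magGeo A B u₀ v₀ z₀ (t + 2 * π * A * (ℓ:ℝ) / z₀) := by
  intro t
  have hA' : A ≠ 0 := ne_of_gt hA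
  have harg : z₀ * (t + 2 * π * A * (ℓ:ℝ) / z₀) / A = z₀ * t / A + (ℓ:ℝ) * (2 * π) := by
    field_simp
  simp only [magGeo, if_pos hz, Hmul, harg, Real.sin_add_int_mul_two_pi,
    Real.cos_add_int_mul_two_pi, Prod.mk.injEq]
  refine ⟨by ring, by ring, ?_⟩
  have expand : (z₀ + B + (u₀ ^ 2 + v₀ ^ 2) / (2 * A * z₀)) * (t + 2 * π * A * (ℓ:ℝ) / z₀)
      = (z₀ + B + (u₀ ^ 2 + v₀ ^ 2) / (2 * A * z₀)) * t + zγ := by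
    rw [mul_add, hK]
  rw [expand]; ring

set_option maxHeartbeats 1000000 in
lemma bwd_alg (A B zγ E : ℝ) (hA : 0 < A) (hzγ : zγ ≠ 0) (hE0 : 0 < E) (hE : E < |B|)
    (ℓ : ℤ) (hl : ℓ ≠ 0) (z₀ : ℝ)
    (h1 : 2 * E / (E - |B|) < zγ / (π * A * (ℓ : ℝ)))
    (h2 : zγ / (π * A * (ℓ : ℝ)) < 2 * E / (E + |B|))
    (hz0 : z₀ = -(Real.sign B) * Real.sqrt ((E ^ 2 - B ^ 2) / (zγ / (π * A * (ℓ : ℝ)) - 1))) :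
    z₀ ≠ 0 ∧ (z₀ + B) ^ 2 < E ^ 2 ∧
    (z₀ + B + (A * (E ^ 2 - (z₀ + B) ^ 2)) / (2 * A * z₀)) * (2 * π * A * (ℓ:ℝ) / z₀) = zγ := by
  have hb : 0 < |B| := hE0.trans hE
  have hB : B ≠ 0 := abs_pos.mp hb
  have hEB2 : E ^ 2 < B ^ 2 := by nlinarith [sq_abs B]
  have hl' : (ℓ : ℝ) ≠ 0 := Int.cast_ne_zero.mpr hl
  have hpal : π * A * (ℓ : ℝ) ≠ 0 := by positivity
  set r := zγ / (π * A * (ℓ : ℝ)) with hrdef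
  have hr1 : r < 1 := by
    have h21 : 2 * E / (E + |B|) < 1 := by
      rw [div_lt_one (by linarith)]; linarith
    linarith
  have hq : 0 < (E ^ 2 - B ^ 2) / (r - 1) :=
    div_pos_of_neg_of_neg (by linarith) (by linarith)
  set s := Real.sqrt ((E ^ 2 - B ^ 2) / (r - 1)) with hsdef
  have hs : 0 < s := Real.sqrt_pos.mpr hq
  have hs2 : s ^ 2 = (E ^ 2 - B ^ 2) / (r - 1) := Real.sq_sqrt hq.le
  have hsgn : (Real.sign B) ^ 2 = 1 := by
    rcases hB.lt_or_gt with h | h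
    · rw [Real.sign_of_neg h]; norm_num
    · rw [Real.sign_of_pos h]; norm_num
  have hz2 : z₀ ^ 2 = (E ^ 2 - B ^ 2) / (r - 1) := by
    have : (-(Real.sign B) * s) ^ 2 = (Real.sign B) ^ 2 * s ^ 2 := by ring
    rw [hz0, this, hsgn, one_mul, hs2]
  have hz2pos : 0 < z₀ ^ 2 := by rw [hz2]; exact hq
  have hz : z₀ ≠ 0 := by intro h; rw [h] at hz2pos; simp at hz2pos
  have key : z₀ ^ 2 * (r - 1) = E ^ 2 - B ^ 2 := by
    rw [hz2, div_mul_cancel₀ _ (show r - (1:ℝ) ≠ 0 by linarith)]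
  have h1' : r * (E - |B|) < 2 * E := (div_lt_iff_of_neg (by linarith)).mp h1
  have h2' : r * (E + |B|) < 2 * E := (lt_div_iff₀ (by linarith)).mp h2
  have lo : (|B| - E) ^ 2 < z₀ ^ 2 := by
    nlinarith [sq_abs B, mul_pos hz2pos (sub_pos.mpr h1')]
  have hi : z₀ ^ 2 < (|B| + E) ^ 2 := by
    nlinarith [sq_abs B, mul_pos hz2pos (sub_pos.mpr h2')]
  have hlt : (z₀ + B) ^ 2 < E ^ 2 := by
    rcases hB.lt_or_gt with h | h
    · -- B < 0, sign = -1, z₀ = s > 0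
      have habs : |B| = -B := abs_of_neg h
      have hz0pos : 0 < z₀ := by
        rw [hz0, Real.sign_of_neg h]; simpa using hs
      rw [habs] at lo hi
      have p1 : 0 < z₀ + (-B - E) := by linarith
      have t1 : -B - E < z₀ := by nlinarith [p1, lo]
      have p2 : 0 < z₀ + (-B + E) := by linarith
      have t2 : z₀ < -B + E := by nlinarith [p2, hi]
      have q1 : 0 < E - (z₀ + B) := by linarith
      have q2 : 0 < E + (z₀ + B) := by linarith
      nlinarith [mul_pos q1 q2]
    · -- B > 0, sign = 1, z₀ = -s < 0
      have habs : |B| = B := abs_of_pos h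
      have hz0neg : z₀ < 0 := by
        rw [hz0, Real.sign_of_pos h]; simpa using hs
      rw [habs] at lo hi
      have p1 : 0 < (B - E) - z₀ := by linarith
      have t1 : z₀ < -(B - E) := by nlinarith [p1, lo]
      have p2 : 0 < (B + E) - z₀ := by linarith
      have t2 : -(B + E) < z₀ := by nlinarith [p2, hi]
      have q1 : 0 < E - (z₀ + B) := by linarith
      have q2 : 0 < E + (z₀ + B) := by linarith
      nlinarith [mul_pos q1 q2]
  refine ⟨hz, hlt, ?_⟩
  have hzγ' : zγ = r * (π * A * (ℓ : ℝ)) := by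
    rw [hrdef, div_mul_cancel₀ _ hpal]
  rw [hzγ']
  have hEz : E ^ 2 - (z₀ + B) ^ 2 = z₀ ^ 2 * r - 2 * z₀ ^ 2 - 2 * z₀ * B := by
    linear_combination -key
  rw [hEz]
  field_simp
  ring

set_option maxHeartbeats 1000000 in
lemma fwd_alg (A B zγ E u₀ v₀ z₀ : ℝ) (hA : 0 < A) (hzγ : zγ ≠ 0) (hE0 : 0 < E)
    (hE : E < |B|) (hz : z₀ ≠ 0) (huv : 0 < u₀ ^ 2 + v₀ ^ 2)
    (hen : E ^ 2 = (u₀ ^ 2 + v₀ ^ 2) / A + (z₀ + B) ^ 2)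
    (ω : ℝ) (hω : ω ≠ 0)
    (hper : ∀ t, Hmul (0, 0, zγ) (magGeo A B u₀ v₀ z₀ t) = magGeo A B u₀ v₀ z₀ (t + ω)) :
    ∃ ℓ : ℤ, ℓ ≠ 0 ∧
      2 * E / (E - |B|) < zγ / (π * A * (ℓ : ℝ)) ∧
      zγ / (π * A * (ℓ : ℝ)) < 2 * E / (E + |B|) ∧
      z₀ = -(Real.sign B) * Real.sqrt ((E ^ 2 - B ^ 2) / (zγ / (π * A * (ℓ : ℝ)) - 1)) := by
  have hA' : A ≠ 0 := ne_of_gt hA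
  have hb : 0 < |B| := hE0.trans hE
  have hB : B ≠ 0 := abs_pos.mp hb
  have hEB2 : E ^ 2 < B ^ 2 := by nlinarith [sq_abs B]
  have h0 := hper 0
  rw [zero_add] at h0
  simp only [magGeo, if_pos hz, Hmul, mul_zero, zero_div, zero_mul, Real.sin_zero,
    Real.cos_zero, Prod.mk.injEq] at h0
  obtain ⟨e1, e2, e3⟩ := h0
  set c := Real.cos (z₀ * ω / A) with hc
  set s := Real.sin (z₀ * ω / A) with hs
  have eq1 : u₀ * s - v₀ * (1 - c) = 0 := by
    field_simp at e1
    first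
    | linarith [e1]
    | linear_combination e1
    | linear_combination -e1
  have eq2 : u₀ * (1 - c) + v₀ * s = 0 := by
    field_simp at e2
    first
    | linarith [e2]
    | linear_combination e2
    | linear_combination -e2
  have keyc : (u₀ ^ 2 + v₀ ^ 2) * (1 - c) = 0 := by
    linear_combination u₀ * eq2 - v₀ * eq1
  have hc1 : c = 1 := by
    rcases mul_eq_zero.mp keyc with h | h
    · exact absurd h (ne_of_gt huv)
    · linarith
  have hs0 : s = 0 := by
    have hpyt := Real.sin_sq_add_cos_sq (z₀ * ω / A)
    rw [← hs, ← hc, hc1] at hpyt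
    have hsq : s ^ 2 = 0 := by nlinarith
    exact (pow_eq_zero_iff two_ne_zero).mp hsq
  obtain ⟨ℓ, hℓ⟩ := (Real.cos_eq_one_iff _).mp hc1
  have hzωA : z₀ * ω / A ≠ 0 := div_ne_zero (mul_ne_zero hz hω) hA'
  have hl : ℓ ≠ 0 := by
    intro h
    apply hzωA
    rw [← hℓ, h]
    simp
  have hl' : (ℓ : ℝ) ≠ 0 := Int.cast_ne_zero.mpr hl
  have hpal : π * A * (ℓ : ℝ) ≠ 0 := by positivity
  have hzω : z₀ * ω = 2 * π * A * (ℓ : ℝ) := by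
    field_simp at hℓ
    first
    | linear_combination hℓ
    | linear_combination -hℓ
    | linarith [hℓ]
  have hω' : ω = 2 * π * A * (ℓ : ℝ) / z₀ := by
    rw [eq_div_iff hz]
    linear_combination hzω
  have hK : (z₀ + B + (u₀ ^ 2 + v₀ ^ 2) / (2 * A * z₀)) * ω = zγ := by
    rw [hs0] at e3
    linarith [e3]
  have huv_eq : u₀ ^ 2 + v₀ ^ 2 = A * (E ^ 2 - (z₀ + B) ^ 2) := by
    field_simp at hen
    linarith
  rw [hω', huv_eq] at hK
  have hz2pos : 0 < z₀ ^ 2 := by positivity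
  have hXval : zγ / (π * A * (ℓ : ℝ)) = (z₀ ^ 2 + E ^ 2 - B ^ 2) / z₀ ^ 2 := by
    rw [← hK]
    field_simp
    ring
  have hlt : (z₀ + B) ^ 2 < E ^ 2 := by
    have : 0 < (u₀ ^ 2 + v₀ ^ 2) / A := div_pos huv hA
    linarith [hen]
  clear hper e1 e2 e3 hK hen huv_eq hzω hℓ hω' hs0 hc1 keyc eq1 eq2 hzωA
  have q1 : -E < z₀ + B := by nlinarith [hlt, hE0]
  have q2 : z₀ + B < E := by nlinarith [hlt, hE0]
  have hstep : (|B| - E) ^ 2 < z₀ ^ 2 ∧ z₀ ^ 2 < (|B| + E) ^ 2 ∧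
      z₀ = -(Real.sign B) * |z₀| := by
    rcases hB.lt_or_gt with h | h
    · have habs : |B| = -B := abs_of_neg h
      have hEB : E < -B := by rw [habs] at hE; exact hE
      have hz0pos : 0 < z₀ := by linarith
      refine ⟨?_, ?_, ?_⟩
      · rw [habs]
        nlinarith [mul_pos (show (0:ℝ) < z₀ - (-B - E) by linarith)
          (show (0:ℝ) < z₀ + (-B - E) by linarith)]
      · rw [habs]
        nlinarith [mul_pos (show (0:ℝ) < (-B + E) - z₀ by linarith)
          (show (0:ℝ) < (-B + E) + z₀ by linarith)]
      · rw [Real.sign_of_neg h, abs_of_pos hz0pos]; ring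
    · have habs : |B| = B := abs_of_pos h
      have hEB : E < B := by rw [habs] at hE; exact hE
      have hz0neg : z₀ < 0 := by linarith
      refine ⟨?_, ?_, ?_⟩
      · rw [habs]
        nlinarith [mul_pos (show (0:ℝ) < -z₀ - (B - E) by linarith)
          (show (0:ℝ) < -z₀ + (B - E) by linarith)]
      · rw [habs]
        nlinarith [mul_pos (show (0:ℝ) < (B + E) - (-z₀) by linarith)
          (show (0:ℝ) < (B + E) + (-z₀) by linarith)]
      · rw [Real.sign_of_pos h, abs_of_neg hz0neg]; ring
  obtain ⟨lo, hi, hsgn⟩ := hstep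
  rw [show B ^ 2 = |B| ^ 2 from (sq_abs B).symm] at hXval
  obtain ⟨hi1, hi2⟩ := ineqs E |B| z₀ (zγ / (π * A * (ℓ : ℝ))) hE0 hE lo hi hz2pos hXval
  refine ⟨ℓ, hl, hi1, hi2, ?_⟩
  · have hne : E ^ 2 - B ^ 2 ≠ 0 := ne_of_lt (sub_neg.mpr hEB2)
    have hXm1 : zγ / (π * A * (ℓ : ℝ)) - 1 = (E ^ 2 - B ^ 2) / z₀ ^ 2 := by
      rw [hXval, show |B| ^ 2 = B ^ 2 from sq_abs B]
      field_simp
      ring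
    have h9 : (E ^ 2 - B ^ 2) / ((E ^ 2 - B ^ 2) / z₀ ^ 2) = z₀ ^ 2 := by
      field_simp
    rw [hXm1, h9, Real.sqrt_sq_eq_abs]
    exact hsgn

/-- Central element `γ = (0,0,z_γ)`, `z_γ ≠ 0`, energy `0 < E < |B|`: a spiraling
magnetic geodesic `σ_{u₀,v₀,z₀}` through `e` of energy `E` is `γ`-periodic for some
period iff there is a nonzero integer `ℓ` with
`2E/(E-|B|) < z_γ/(πAℓ) < 2E/(E+|B|)` and
`z₀ = -sgn(B)·√((E²-B²)/(z_γ/(πAℓ) - 1))`; in that case `ω = 2πAℓ/z₀` is a period,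
and every `(u₀,v₀)` with `u₀²+v₀² = A(E² - (z₀+B)²)` yields such a spiraling
`γ`-periodic geodesic of energy `E`. -/
theorem stmt9 (A B zγ E : ℝ) (hA : 0 < A) (hzγ : zγ ≠ 0) (hE0 : 0 < E) (hE : E < |B|) :
    (∀ u₀ v₀ z₀ : ℝ, z₀ ≠ 0 → (u₀, v₀) ≠ (0, 0) →
        E ^ 2 = (u₀ ^ 2 + v₀ ^ 2) / A + (z₀ + B) ^ 2 →
      ((∃ ω : ℝ, ω ≠ 0 ∧
          ∀ t, Hmul (0, 0, zγ) (magGeo A B u₀ v₀ z₀ t) = magGeo A B u₀ v₀ z₀ (t + ω))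
        ↔ ∃ ℓ : ℤ, ℓ ≠ 0 ∧
            2 * E / (E - |B|) < zγ / (π * A * (ℓ : ℝ)) ∧
            zγ / (π * A * (ℓ : ℝ)) < 2 * E / (E + |B|) ∧
            z₀ = -(Real.sign B) *
              Real.sqrt ((E ^ 2 - B ^ 2) / (zγ / (π * A * (ℓ : ℝ)) - 1)))) ∧
    (∀ ℓ : ℤ, ℓ ≠ 0 → ∀ z₀ : ℝ,
      2 * E / (E - |B|) < zγ / (π * A * (ℓ : ℝ)) →
      zγ / (π * A * (ℓ : ℝ)) < 2 * E / (E + |B|) →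
      z₀ = -(Real.sign B) * Real.sqrt ((E ^ 2 - B ^ 2) / (zγ / (π * A * (ℓ : ℝ)) - 1)) →
      ∀ u₀ v₀ : ℝ, u₀ ^ 2 + v₀ ^ 2 = A * (E ^ 2 - (z₀ + B) ^ 2) →
        z₀ ≠ 0 ∧ (u₀, v₀) ≠ (0, 0) ∧
        E ^ 2 = (u₀ ^ 2 + v₀ ^ 2) / A + (z₀ + B) ^ 2 ∧
        2 * π * A * (ℓ : ℝ) / z₀ ≠ 0 ∧
        (∀ t, Hmul (0, 0, zγ) (magGeo A B u₀ v₀ z₀ t)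
          = magGeo A B u₀ v₀ z₀ (t + 2 * π * A * (ℓ : ℝ) / z₀))) := by
  have hA' : A ≠ 0 := ne_of_gt hA
  have hl'' : True := trivial
  constructor
  · intro u₀ v₀ z₀ hz hne hen
    have huv : 0 < u₀ ^ 2 + v₀ ^ 2 := by
      by_contra h
      push_neg at h
      have h0 : u₀ ^ 2 + v₀ ^ 2 = 0 := le_antisymm h (by positivity)
      have hu : u₀ = 0 := by nlinarith [sq_nonneg u₀, sq_nonneg v₀]
      have hv : v₀ = 0 := by nlinarith [sq_nonneg u₀, sq_nonneg v₀]
      exact hne (by simp [hu, hv])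
    constructor
    · rintro ⟨ω, hω, hper⟩
      exact fwd_alg A B zγ E u₀ v₀ z₀ hA hzγ hE0 hE hz huv hen ω hω hper
    · rintro ⟨ℓ, hl, h1, h2, hz0⟩
      obtain ⟨hz', hlt, hK⟩ := bwd_alg A B zγ E hA hzγ hE0 hE ℓ hl z₀ h1 h2 hz0
      have huv_eq : u₀ ^ 2 + v₀ ^ 2 = A * (E ^ 2 - (z₀ + B) ^ 2) := by
        field_simp at hen
        linarith
      have hl' : (ℓ : ℝ) ≠ 0 := Int.cast_ne_zero.mpr hl
      refine ⟨2 * π * A * (ℓ : ℝ) / z₀, ?_, ?_⟩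
      · exact div_ne_zero (by positivity) hz
      · have hK' : (z₀ + B + (u₀ ^ 2 + v₀ ^ 2) / (2 * A * z₀))
            * (2 * π * A * (ℓ : ℝ) / z₀) = zγ := by
          rw [huv_eq]
          exact hK
        exact hK_periodic A B u₀ v₀ z₀ zγ hA hz ℓ hK'
  · intro ℓ hl z₀ h1 h2 hz0 u₀ v₀ huv_eq
    obtain ⟨hz', hlt, hK⟩ := bwd_alg A B zγ E hA hzγ hE0 hE ℓ hl z₀ h1 h2 hz0
    have hl' : (ℓ : ℝ) ≠ 0 := Int.cast_ne_zero.mpr hl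
    have huvpos : 0 < u₀ ^ 2 + v₀ ^ 2 := by
      rw [huv_eq]
      exact mul_pos hA (by linarith)
    have hne : (u₀, v₀) ≠ (0, 0) := by
      intro h
      rw [Prod.mk.injEq] at h
      rw [h.1, h.2] at huvpos
      simp at huvpos
    have hen : E ^ 2 = (u₀ ^ 2 + v₀ ^ 2) / A + (z₀ + B) ^ 2 := by
      rw [huv_eq]
      field_simp
      ring
    have hωne : 2 * π * A * (ℓ : ℝ) / z₀ ≠ 0 := div_ne_zero (by positivity) hz'
    refine ⟨hz', hne, hen, hωne, ?_⟩
    have hK' : (z₀ + B + (u₀ ^ 2 + v₀ ^ 2) / (2 * A * z₀))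
        * (2 * π * A * (ℓ : ℝ) / z₀) = zγ := by
      rw [huv_eq]
      exact hK
    exact hK_periodic A B u₀ v₀ z₀ zγ hA hz' ℓ hK'
end
end

section
/- Let γ = (0,0,z_γ) ∈ H with z_γ ≠ 0, let B ≠ 0 and let E = |B|. A spiraling magnetic geodesic σ_{u₀,v₀,z₀} through e of energy E is γ-periodic with some period if and only if z_γ/(πA) ∈ ℤ and (z₀+B)² < B² (equivalently, z₀ lies strictly between 0 and −2B); in that case ω = 2z_γ/z₀ is a period. In particular, if z_γ ∉ πAℤ then no spiraling magnetic geodesic of energy |B| is γ-periodic. -/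
open Real

noncomputable section

lemma aux10 (A B zγ : ℝ) (hA : 0 < A) (hzγ : zγ ≠ 0)
    (u₀ v₀ z₀ : ℝ) (hz₀ : z₀ ≠ 0) (huv : (u₀, v₀) ≠ (0, 0))
    (hE : B ^ 2 = (u₀ ^ 2 + v₀ ^ 2) / A + (z₀ + B) ^ 2) :
    ((∃ ω : ℝ, ω ≠ 0 ∧
        ∀ t, Hmul (0, 0, zγ) (magGeo A B u₀ v₀ z₀ t) = magGeo A B u₀ v₀ z₀ (t + ω))
      ↔ ((∃ ℓ : ℤ, zγ = π * A * (ℓ : ℝ)) ∧ (z₀ + B) ^ 2 < B ^ 2)) ∧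
    (((∃ ℓ : ℤ, zγ = π * A * (ℓ : ℝ)) ∧ (z₀ + B) ^ 2 < B ^ 2) →
      2 * zγ / z₀ ≠ 0 ∧
      (∀ t, Hmul (0, 0, zγ) (magGeo A B u₀ v₀ z₀ t)
        = magGeo A B u₀ v₀ z₀ (t + 2 * zγ / z₀))) := by
  have hA0 : A ≠ 0 := ne_of_gt hA
  have hr : 0 < u₀ ^ 2 + v₀ ^ 2 := by
    have h : u₀ ≠ 0 ∨ v₀ ≠ 0 := by
      by_contra h; push_neg at h; exact huv (by simp [h.1, h.2])
    rcases h with h | h <;> positivity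
  have hlt : (z₀ + B) ^ 2 < B ^ 2 := by
    have h1 : 0 < (u₀ ^ 2 + v₀ ^ 2) / A := div_pos hr hA
    linarith
  have hsum : u₀ ^ 2 + v₀ ^ 2 = -(A * z₀ ^ 2) - 2 * A * B * z₀ := by
    field_simp at hE
    linarith [hE]
  have hc : z₀ + B + (u₀ ^ 2 + v₀ ^ 2) / (2 * A * z₀) = z₀ / 2 := by
    rw [hsum]; field_simp; ring
  have hperiod : ∀ ℓ : ℤ, zγ = π * A * (ℓ : ℝ) →
      ∀ t, Hmul (0, 0, zγ) (magGeo A B u₀ v₀ z₀ t)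
        = magGeo A B u₀ v₀ z₀ (t + 2 * zγ / z₀) := by
    rintro ℓ rfl t
    have harg : z₀ * (t + 2 * (π * A * (ℓ : ℝ)) / z₀) / A = z₀ * t / A + (ℓ : ℝ) * (2 * π) := by
      field_simp
    simp only [Hmul, magGeo, hz₀, if_pos, ne_eq, not_false_eq_true, if_true]
    rw [harg, Real.sin_add_int_mul_two_pi, Real.cos_add_int_mul_two_pi]
    refine Prod.ext (by ring) (Prod.ext (by ring) ?_)
    simp only
    rw [hc]
    field_simp
    ring
  constructor
  · constructor
    · rintro ⟨ω, hω0, hper⟩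
      refine ⟨?_, hlt⟩
      have h0 := hper 0
      simp only [Hmul, magGeo, hz₀, ne_eq, not_false_eq_true, if_true, Prod.mk.injEq,
        zero_add, mul_zero, zero_div, Real.sin_zero, Real.cos_zero] at h0
      obtain ⟨hx, hy, hz⟩ := h0
      set S := Real.sin (z₀ * ω / A) with hSdef
      set C := Real.cos (z₀ * ω / A) with hCdef
      have e1 : u₀ * S - v₀ * (1 - C) = 0 := by
        field_simp at hx
        linear_combination -hx
      have e2 : u₀ * (1 - C) + v₀ * S = 0 := by
        field_simp at hy
        linear_combination -hy
      have hS : S = 0 := by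
        have h : (u₀ ^ 2 + v₀ ^ 2) * S = 0 := by linear_combination u₀ * e1 + v₀ * e2
        rcases mul_eq_zero.mp h with h | h
        · exact absurd h (ne_of_gt hr)
        · exact h
      have hC : C = 1 := by
        have h : (u₀ ^ 2 + v₀ ^ 2) * (1 - C) = 0 := by
          linear_combination (-v₀) * e1 + u₀ * e2
        rcases mul_eq_zero.mp h with h | h
        · exact absurd h (ne_of_gt hr)
        · linarith
      -- z equation: zγ = (z₀/2) * ω
      rw [hc, hS] at hz
      -- hz : zγ + 0 = z₀/2 * ω - K * 0  (form?)
      obtain ⟨n, hn⟩ := (Real.cos_eq_one_iff _).mp hC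
      refine ⟨n, ?_⟩
      -- hn : n * (2π) = z₀ * ω / A, hz gives zγ = z₀ ω / 2
      have hω : zγ = z₀ / 2 * ω := by linarith [hz]
      field_simp at hn
      rw [hω]
      linear_combination (-(1:ℝ)/2) * hn
    · rintro ⟨⟨ℓ, hℓ⟩, -⟩
      exact ⟨2 * zγ / z₀, by
        simp only [ne_eq, div_eq_zero_iff, not_or]
        constructor
        · intro h; exact hzγ (by linarith)
        · exact hz₀, hperiod ℓ hℓ⟩
  · rintro ⟨⟨ℓ, hℓ⟩, -⟩
    refine ⟨?_, hperiod ℓ hℓ⟩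
    simp only [ne_eq, div_eq_zero_iff, not_or]
    exact ⟨fun h => hzγ (by linarith), hz₀⟩

/-- Central element `γ = (0,0,z_γ)`, `z_γ ≠ 0`, critical energy `E = |B|` (with `B ≠ 0`):
a spiraling magnetic geodesic `σ_{u₀,v₀,z₀}` through `e` of energy `|B|` is `γ`-periodic
for some period iff `z_γ/(πA) ∈ ℤ` and `(z₀+B)² < B²` (equivalently, `z₀` lies strictly
between `0` and `-2B`); in that case `ω = 2z_γ/z₀` is a period. In particular, if
`z_γ ∉ πAℤ` then no spiraling magnetic geodesic of energy `|B|` is `γ`-periodic. -/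
theorem stmt10 (A B zγ : ℝ) (hA : 0 < A) (hzγ : zγ ≠ 0) (hB : B ≠ 0) :
    (∀ z₀ : ℝ, (z₀ + B) ^ 2 < B ^ 2 ↔
      ((0 < z₀ ∧ z₀ < -2 * B) ∨ (-2 * B < z₀ ∧ z₀ < 0))) ∧
    (∀ u₀ v₀ z₀ : ℝ, z₀ ≠ 0 → (u₀, v₀) ≠ (0, 0) →
        B ^ 2 = (u₀ ^ 2 + v₀ ^ 2) / A + (z₀ + B) ^ 2 →
      ((∃ ω : ℝ, ω ≠ 0 ∧
          ∀ t, Hmul (0, 0, zγ) (magGeo A B u₀ v₀ z₀ t) = magGeo A B u₀ v₀ z₀ (t + ω))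
        ↔ ((∃ ℓ : ℤ, zγ = π * A * (ℓ : ℝ)) ∧ (z₀ + B) ^ 2 < B ^ 2)) ∧
      (((∃ ℓ : ℤ, zγ = π * A * (ℓ : ℝ)) ∧ (z₀ + B) ^ 2 < B ^ 2) →
        2 * zγ / z₀ ≠ 0 ∧
        (∀ t, Hmul (0, 0, zγ) (magGeo A B u₀ v₀ z₀ t)
          = magGeo A B u₀ v₀ z₀ (t + 2 * zγ / z₀)))) ∧
    (¬ (∃ ℓ : ℤ, zγ = π * A * (ℓ : ℝ)) →
      ∀ u₀ v₀ z₀ : ℝ, z₀ ≠ 0 → (u₀, v₀) ≠ (0, 0) →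
        B ^ 2 = (u₀ ^ 2 + v₀ ^ 2) / A + (z₀ + B) ^ 2 →
        ¬ (∃ ω : ℝ, ω ≠ 0 ∧
            ∀ t, Hmul (0, 0, zγ) (magGeo A B u₀ v₀ z₀ t) = magGeo A B u₀ v₀ z₀ (t + ω))) := by
  refine ⟨?_, ?_, ?_⟩
  · intro z₀
    constructor
    · intro h
      rcases lt_trichotomy z₀ 0 with h0 | h0 | h0
      · right; constructor <;> nlinarith
      · exfalso; rw [h0] at h; simp at h
      · left; constructor <;> nlinarith
    · rintro (⟨h1, h2⟩ | ⟨h1, h2⟩) <;> nlinarith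
  · intro u₀ v₀ z₀ hz₀ huv hE
    exact aux10 A B zγ hA hzγ u₀ v₀ z₀ hz₀ huv hE
  · intro hnot u₀ v₀ z₀ hz₀ huv hE hex
    exact hnot ((aux10 A B zγ hA hzγ u₀ v₀ z₀ hz₀ huv hE).1.mp hex).1
end
end

section
/- Let γ = (x_γ,y_γ,z_γ) ∈ H with (x_γ,y_γ) ≠ (0,0). If 0 < E ≤ |B| then L(γ;E) = ∅, while if E > |B| then L(γ;E) = { √(A(x_γ²+y_γ²)) / √(1 − B²/E²) }. -/
open Real

noncomputable section

/-- `L(γ;E)` for `γ ≠ e`: the set of lengths `E·|ω|` over all magnetic geodesics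
(left translates of the `σ_{u₀,v₀,z₀}`) of energy `E` and all `ω ≠ 0` such that the
geodesic is `γ`-periodic with period `ω`. -/
def Lset (A B : ℝ) (γ : H3) (E : ℝ) : Set ℝ :=
  {l | ∃ (a : H3) (u₀ v₀ z₀ ω : ℝ),
    E ^ 2 = (u₀ ^ 2 + v₀ ^ 2) / A + (z₀ + B) ^ 2 ∧ ω ≠ 0 ∧
    (∀ t, Hmul γ (Hmul a (magGeo A B u₀ v₀ z₀ t)) = Hmul a (magGeo A B u₀ v₀ z₀ (t + ω))) ∧
    l = E * |ω|}

lemma drift_zero (g : ℝ → ℝ) (c ω M : ℝ) (h : ∀ t, g (t + ω) = g t + c)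
    (h0 : g 0 = 0) (hM : ∀ t, |g t| ≤ M) : c = 0 := by
  have key : ∀ n : ℕ, g (n * ω) = n * c := by
    intro n
    induction n with
    | zero => simpa using h0
    | succ n ih =>
      have h2 := h (n * ω)
      push_cast
      rw [show ((n : ℝ) + 1) * ω = n * ω + ω by ring, h2, ih]
      ring
  by_contra hc
  have hcpos : 0 < |c| := abs_pos.mpr hc
  obtain ⟨n, hn⟩ := exists_nat_gt (M / |c|)
  have h1 : (n : ℝ) * |c| ≤ M := by
    have := hM ((n : ℝ) * ω)
    rw [key n, abs_mul, Nat.abs_cast] at this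
    exact this
  have h2 : (n : ℝ) ≤ M / |c| := (le_div_iff₀ hcpos).mpr h1
  linarith

lemma bounded_comp (u v z A : ℝ) (hz : z ≠ 0) (t : ℝ) :
    |u / z * Real.sin (z * t / A) - v / z * (1 - Real.cos (z * t / A))| ≤
      |u / z| + |v / z| * 2 := by
  have hs : |Real.sin (z * t / A)| ≤ 1 := abs_sin_le_one _
  have hc : |1 - Real.cos (z * t / A)| ≤ 2 := by
    rw [abs_le]
    constructor <;> nlinarith [Real.neg_one_le_cos (z * t / A), Real.cos_le_one (z * t / A)]
  calc |u / z * Real.sin (z * t / A) - v / z * (1 - Real.cos (z * t / A))|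
      ≤ |u / z * Real.sin (z * t / A)| + |v / z * (1 - Real.cos (z * t / A))| := abs_sub _ _
    _ = |u / z| * |Real.sin (z * t / A)| + |v / z| * |1 - Real.cos (z * t / A)| := by
        rw [abs_mul, abs_mul]
    _ ≤ |u / z| * 1 + |v / z| * 2 := by gcongr <;> positivity
    _ = |u / z| + |v / z| * 2 := by ring

lemma forward (A B : ℝ) (hA : 0 < A) (xγ yγ zγ : ℝ) (hγ : (xγ, yγ) ≠ (0, 0)) (E l : ℝ)
    (hl : l ∈ Lset A B (xγ, yγ, zγ) E) :
    B ^ 2 < E ^ 2 ∧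
      l = E * Real.sqrt (A * (xγ ^ 2 + yγ ^ 2)) / Real.sqrt (E ^ 2 - B ^ 2) := by
  obtain ⟨a, u₀, v₀, z₀, ω, hEeq, hω, hper, hlval⟩ := hl
  have hxy : 0 < xγ ^ 2 + yγ ^ 2 := by
    rcases (by
      by_contra hcon
      push_neg at hcon
      exact hγ (by simp [hcon.1, hcon.2]) : xγ ≠ 0 ∨ yγ ≠ 0) with h | h <;>
      nlinarith [sq_nonneg xγ, sq_nonneg yγ, pow_pos (abs_pos.mpr h) 2, sq_abs xγ, sq_abs yγ]
  by_cases hz : z₀ = 0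
  · -- straight-line case
    subst hz
    have h1 := congrArg Prod.fst (hper 0)
    have h2 := congrArg (fun p : H3 => p.2.1) (hper 0)
    simp only [Hmul, magGeo, if_neg (by simp : ¬ (0:ℝ) ≠ 0)] at h1 h2
    have hx : xγ = u₀ * ω / A := by
      field_simp at h1 ⊢
      linarith
    have hy : yγ = v₀ * ω / A := by
      field_simp at h2 ⊢
      linarith
    have hu : u₀ = A * xγ / ω := by rw [hx]; field_simp
    have hv : v₀ = A * yγ / ω := by rw [hy]; field_simp
    have hω2 : (0:ℝ) < ω ^ 2 := by positivity
    have hE2 : E ^ 2 - B ^ 2 = A * (xγ ^ 2 + yγ ^ 2) / ω ^ 2 := by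
      rw [hEeq, hu, hv]
      field_simp
      ring
    have hpos : 0 < E ^ 2 - B ^ 2 := by rw [hE2]; positivity
    refine ⟨by linarith, ?_⟩
    have hωval : ω ^ 2 = A * (xγ ^ 2 + yγ ^ 2) / (E ^ 2 - B ^ 2) := by
      field_simp at hE2 ⊢
      linarith [hE2]
    have habs : |ω| = Real.sqrt (A * (xγ ^ 2 + yγ ^ 2)) / Real.sqrt (E ^ 2 - B ^ 2) := by
      rw [← Real.sqrt_sq_eq_abs, hωval, Real.sqrt_div (by positivity)]
    rw [hlval, habs]
    ring
  · -- circular case: impossible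
    exfalso
    have h1 := fun t => congrArg Prod.fst (hper t)
    have h2 := fun t => congrArg (fun p : H3 => p.2.1) (hper t)
    simp only [Hmul, magGeo, if_pos hz] at h1 h2
    have hxz : xγ = 0 := by
      apply drift_zero
        (fun t => u₀ / z₀ * Real.sin (z₀ * t / A) - v₀ / z₀ * (1 - Real.cos (z₀ * t / A)))
        xγ ω (|u₀ / z₀| + |v₀ / z₀| * 2)
      · intro t
        have := h1 t
        linarith
      · simp
      · intro t
        exact bounded_comp u₀ v₀ z₀ A hz t
    have hyz : yγ = 0 := by
      apply drift_zero
        (fun t => u₀ / z₀ * (1 - Real.cos (z₀ * t / A)) + v₀ / z₀ * Real.sin (z₀ * t / A))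
        yγ ω (|v₀ / z₀| + |u₀ / z₀| * 2)
      · intro t
        have := h2 t
        linarith
      · simp
      · intro t
        have := bounded_comp v₀ u₀ z₀ A hz t
        calc |u₀ / z₀ * (1 - Real.cos (z₀ * t / A)) + v₀ / z₀ * Real.sin (z₀ * t / A)|
            = |v₀ / z₀ * Real.sin (z₀ * t / A) - u₀ / z₀ * (Real.cos (z₀ * t / A) - 1)| := by
              ring_nf
          _ ≤ |v₀ / z₀ * Real.sin (z₀ * t / A)| + |u₀ / z₀ * (Real.cos (z₀ * t / A) - 1)| :=
              abs_sub _ _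
          _ ≤ |v₀ / z₀| + |u₀ / z₀| * 2 := by
              rw [abs_mul, abs_mul]
              have hs : |Real.sin (z₀ * t / A)| ≤ 1 := abs_sin_le_one _
              have hc : |Real.cos (z₀ * t / A) - 1| ≤ 2 := by
                rw [abs_le]
                constructor <;>
                  nlinarith [Real.neg_one_le_cos (z₀ * t / A), Real.cos_le_one (z₀ * t / A)]
              nlinarith [abs_nonneg (v₀ / z₀), abs_nonneg (u₀ / z₀),
                abs_nonneg (Real.sin (z₀ * t / A)), abs_nonneg (Real.cos (z₀ * t / A) - 1)]
    exact hγ (by simp [hxz, hyz])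

lemma sqrt_identity (B E : ℝ) (hE : 0 < E) (hpos : 0 < E ^ 2 - B ^ 2) :
    Real.sqrt (1 - B ^ 2 / E ^ 2) = Real.sqrt (E ^ 2 - B ^ 2) / E := by
  rw [show 1 - B ^ 2 / E ^ 2 = (E ^ 2 - B ^ 2) / E ^ 2 by field_simp,
    Real.sqrt_div hpos.le, Real.sqrt_sq hE.le]

/-- For noncentral `γ = (x_γ, y_γ, z_γ)`: if `0 < E ≤ |B|` then `L(γ;E) = ∅`, while if
`E > |B|` then `L(γ;E) = { √(A(x_γ²+y_γ²)) / √(1 - B²/E²) }`. -/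
theorem stmt12 (A B : ℝ) (hA : 0 < A) (xγ yγ zγ : ℝ) (hγ : (xγ, yγ) ≠ (0, 0)) :
    (∀ E : ℝ, 0 < E → E ≤ |B| → Lset A B (xγ, yγ, zγ) E = ∅) ∧
    (∀ E : ℝ, |B| < E →
      Lset A B (xγ, yγ, zγ) E
        = {Real.sqrt (A * (xγ ^ 2 + yγ ^ 2)) / Real.sqrt (1 - B ^ 2 / E ^ 2)}) := by
  have hxy : 0 < xγ ^ 2 + yγ ^ 2 := by
    rcases (by
      by_contra hcon
      push_neg at hcon
      exact hγ (by simp [hcon.1, hcon.2]) : xγ ≠ 0 ∨ yγ ≠ 0) with h | h <;>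
      nlinarith [sq_nonneg xγ, sq_nonneg yγ, pow_pos (abs_pos.mpr h) 2, sq_abs xγ, sq_abs yγ]
  constructor
  · intro E hE hEB
    rw [Set.eq_empty_iff_forall_notMem]
    intro l hl
    have h2 := (forward A B hA xγ yγ zγ hγ E l hl).1
    nlinarith [abs_nonneg B, sq_abs B]
  · intro E hBE
    have hE : 0 < E := lt_of_le_of_lt (abs_nonneg B) hBE
    have hpos : 0 < E ^ 2 - B ^ 2 := by
      nlinarith [sq_abs B, abs_nonneg B, mul_self_lt_mul_self (abs_nonneg B) hBE]
    have hS : 0 < A * (xγ ^ 2 + yγ ^ 2) := by positivity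
    have hsqD : 0 < Real.sqrt (E ^ 2 - B ^ 2) := Real.sqrt_pos.mpr hpos
    ext l
    simp only [Set.mem_singleton_iff]
    constructor
    · intro hl
      obtain ⟨_, hlv⟩ := forward A B hA xγ yγ zγ hγ E l hl
      rw [hlv, sqrt_identity B E hE hpos, div_div_eq_mul_div]
      ring
    · intro hl
      obtain ⟨a1, a2, hk⟩ : ∃ a1 a2 : ℝ,
          xγ * a2 - yγ * a1 = B * Real.sqrt (A * (xγ ^ 2 + yγ ^ 2) / (E ^ 2 - B ^ 2)) - zγ := by
        by_cases hx : xγ = 0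
        · have hy : yγ ≠ 0 := by
            intro h; exact hγ (by simp [hx, h])
          refine ⟨(zγ - B * Real.sqrt (A * (xγ ^ 2 + yγ ^ 2) / (E ^ 2 - B ^ 2))) / yγ, 0, ?_⟩
          field_simp [hx]
          ring
        · exact ⟨0, (B * Real.sqrt (A * (xγ ^ 2 + yγ ^ 2) / (E ^ 2 - B ^ 2)) - zγ) / xγ, by
            field_simp
            ring⟩
      set ω := Real.sqrt (A * (xγ ^ 2 + yγ ^ 2) / (E ^ 2 - B ^ 2)) with hωdef
      have hωpos : 0 < ω := Real.sqrt_pos.mpr (by positivity)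
      have hω2 : ω ^ 2 = A * (xγ ^ 2 + yγ ^ 2) / (E ^ 2 - B ^ 2) :=
        Real.sq_sqrt (by positivity)
      refine ⟨(a1, a2, 0), A * xγ / ω, A * yγ / ω, 0, ω, ?_, hωpos.ne', ?_, ?_⟩
      · have key : A * (xγ ^ 2 + yγ ^ 2) / ω ^ 2 = E ^ 2 - B ^ 2 := by
          rw [hω2]
          field_simp
        have expand : ((A * xγ / ω) ^ 2 + (A * yγ / ω) ^ 2) / A
            = A * (xγ ^ 2 + yγ ^ 2) / ω ^ 2 := by
          field_simp
        rw [expand, key]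
        ring
      · intro t
        simp only [Hmul, magGeo, if_neg (by simp : ¬ (0:ℝ) ≠ 0), Prod.mk.injEq]
        refine ⟨by field_simp; ring, by field_simp; ring, ?_⟩
        field_simp
        linear_combination (2 * ω) * hk
      · rw [hl, abs_of_pos hωpos, hωdef, Real.sqrt_div hS.le, sqrt_identity B E hE hpos,
          div_div_eq_mul_div]
        ring
end
end

section
/- Let A > 0, E > |B| > 0 and z_γ ≠ 0. Every element s of the set S = { √(4πAℓ(z_γ − πAℓ))/√(1 − B²/E²) : ℓ ∈ ℤ, 2E/(E+|B|) < z_γ/(πAℓ) } satisfies s ≤ |z_γ|/√(1 − B²/E²), and this upper bound is strictly greater than |z_γ|. Moreover the bound can be attained: for A = 1, B = 1, E = 2 and z_γ = 20π, the element of S corresponding to ℓ = 10 equals (2/√3)·20π = |z_γ|/√(1 − B²/E²) > |z_γ|. -/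
open Real

/-- For `E > |B| > 0` the set of lengths of spiraling closed magnetic geodesics of
energy `E` in a central free homotopy class `z_γ ≠ 0` is bounded above by
`|z_γ|/√(1 - B²/E²)`, which is strictly larger than `|z_γ|`; and the bound is attained
for `A = 1`, `B = 1`, `E = 2`, `z_γ = 20π` at `ℓ = 10`. -/
theorem stmt14 (A B E zγ : ℝ) (hA : 0 < A) (hB : 0 < |B|) (hE : |B| < E) (hzγ : zγ ≠ 0) :
    (∀ s ∈ {s : ℝ | ∃ ℓ : ℤ, 2 * E / (E + |B|) < zγ / (π * A * (ℓ : ℝ)) ∧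
        s = Real.sqrt (4 * π * A * (ℓ : ℝ) * (zγ - π * A * (ℓ : ℝ)))
              / Real.sqrt (1 - B ^ 2 / E ^ 2)},
      s ≤ |zγ| / Real.sqrt (1 - B ^ 2 / E ^ 2)) ∧
    |zγ| < |zγ| / Real.sqrt (1 - B ^ 2 / E ^ 2) ∧
    (2 * (2 : ℝ) / (2 + |(1 : ℝ)|) < 20 * π / (π * 1 * ((10 : ℤ) : ℝ)) ∧
     Real.sqrt (4 * π * 1 * ((10 : ℤ) : ℝ) * (20 * π - π * 1 * ((10 : ℤ) : ℝ)))
        / Real.sqrt (1 - (1 : ℝ) ^ 2 / (2 : ℝ) ^ 2)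
       = (2 / Real.sqrt 3) * (20 * π) ∧
     (2 / Real.sqrt 3) * (20 * π)
       = |20 * π| / Real.sqrt (1 - (1 : ℝ) ^ 2 / (2 : ℝ) ^ 2) ∧
     |(20 * π : ℝ)| < (2 / Real.sqrt 3) * (20 * π)) := by
  have hπ := Real.pi_pos
  have hEpos : 0 < E := lt_trans hB hE
  have hq1 : B ^ 2 / E ^ 2 < 1 := by
    rw [div_lt_one (by positivity)]
    have : |B| ^ 2 < E ^ 2 := by nlinarith
    rwa [sq_abs] at this
  have h1 : 0 < 1 - B ^ 2 / E ^ 2 := by linarith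
  have hspos : 0 < Real.sqrt (1 - B ^ 2 / E ^ 2) := Real.sqrt_pos.mpr h1
  have hs1 : Real.sqrt (1 - B ^ 2 / E ^ 2) < 1 := by
    have hB0 : B ≠ 0 := by
      intro h; rw [h, abs_zero] at hB; exact lt_irrefl 0 hB
    have hq0 : 0 < B ^ 2 / E ^ 2 := by positivity
    nlinarith [Real.sq_sqrt h1.le, Real.sqrt_nonneg (1 - B ^ 2 / E ^ 2)]
  have hs3pos : (0 : ℝ) < Real.sqrt 3 := Real.sqrt_pos.mpr (by norm_num)
  have hs3lt : Real.sqrt 3 < 2 := by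
    nlinarith [Real.sq_sqrt (by norm_num : (3:ℝ) ≥ 0)]
  have hden : (1 - (1 : ℝ) ^ 2 / (2 : ℝ) ^ 2) = (Real.sqrt 3 / 2) ^ 2 := by
    rw [div_pow, Real.sq_sqrt (by norm_num : (3:ℝ) ≥ 0)]; norm_num
  have hdensqrt : Real.sqrt (1 - (1 : ℝ) ^ 2 / (2 : ℝ) ^ 2) = Real.sqrt 3 / 2 := by
    rw [hden, Real.sqrt_sq (by positivity)]
  refine ⟨?_, ?_, ?_, ?_, ?_, ?_⟩
  · rintro s ⟨ℓ, -, rfl⟩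
    have hnum : Real.sqrt (4 * π * A * (ℓ : ℝ) * (zγ - π * A * (ℓ : ℝ))) ≤ |zγ| := by
      rw [← Real.sqrt_sq_eq_abs]
      apply Real.sqrt_le_sqrt
      nlinarith [sq_nonneg (zγ - 2 * (π * A * (ℓ : ℝ)))]
    gcongr
  · rw [lt_div_iff₀ hspos]
    have hz : 0 < |zγ| := abs_pos.mpr hzγ
    nlinarith
  · rw [show π * 1 * ((10 : ℤ) : ℝ) = 10 * π by push_cast; ring]
    rw [show 20 * π / (10 * π) = 2 by field_simp; ring]
    norm_num
  · rw [show 4 * π * 1 * ((10 : ℤ) : ℝ) * (20 * π - π * 1 * ((10 : ℤ) : ℝ)) = (20 * π) ^ 2 by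
      push_cast; ring]
    rw [Real.sqrt_sq (by positivity), hdensqrt]
    field_simp
  · rw [hdensqrt, abs_of_pos (by positivity : (0:ℝ) < 20 * π)]
    field_simp
  · rw [abs_of_pos (by positivity : (0:ℝ) < 20 * π)]
    rw [show (2 / Real.sqrt 3) * (20 * π) = 20 * π * (2 / Real.sqrt 3) by ring]
    nth_rewrite 1 [show (20 * π : ℝ) = 20 * π * 1 by ring]
    apply mul_lt_mul_of_pos_left _ (by positivity)
    rw [lt_div_iff₀ hs3pos]; linarith
end

section
/- Let A > 0, B ∈ ℝ, E > |B| and z̄ > 0. Then the set S⁻ = { −√((E²−B²)/(hz̄/(πAℓ) − 1)) : h, ℓ positive integers, 2E/(E+B) < hz̄/(πAℓ) } is dense in the interval (−E−B, 0), and the set S⁺ = { √((E²−B²)/(hz̄/(πAℓ) − 1)) : h, ℓ positive integers, 2E/(E−B) < hz̄/(πAℓ) } is dense in the interval (0, E−B); consequently S⁻ ∪ S⁺ is dense in [−E−B, E−B]. -/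
open Real

lemma exists_hl (A zbar c r₀ r₁ : ℝ) (hA : 0 < A) (hz : 0 < zbar)
    (hr0 : 0 < r₀) (hc : c < r₀) (h01 : r₀ < r₁) :
    ∃ h ℓ : ℕ, 0 < h ∧ 0 < ℓ ∧ c < (h : ℝ) * zbar / (π * A * (ℓ : ℝ)) ∧
      r₀ ≤ (h : ℝ) * zbar / (π * A * (ℓ : ℝ)) ∧
      (h : ℝ) * zbar / (π * A * (ℓ : ℝ)) < r₁ := by
  have hπA : 0 < π * A := mul_pos Real.pi_pos hA
  have hd : 0 < r₁ - r₀ := by linarith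
  obtain ⟨ℓ, hℓ⟩ := exists_nat_gt (zbar / (π * A * (r₁ - r₀)))
  have hℓpos : 0 < ℓ := by
    by_contra hcon
    have : ℓ = 0 := by omega
    subst this
    have : 0 < zbar / (π * A * (r₁ - r₀)) := div_pos hz (by positivity)
    simp at hℓ; linarith
  have hℓR : (0:ℝ) < ℓ := by exact_mod_cast hℓpos
  set s : ℝ := zbar / (π * A * ℓ) with hs_def
  have hspos : 0 < s := div_pos hz (by positivity)
  have hslt : s < r₁ - r₀ := by
    rw [hs_def, div_lt_iff₀ (by positivity)]
    have := (div_lt_iff₀ (by positivity : (0:ℝ) < π * A * (r₁ - r₀))).mp hℓ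
    nlinarith
  set h : ℕ := ⌈r₀ / s⌉₊ with hh_def
  have hhpos : 0 < h := Nat.ceil_pos.mpr (div_pos hr0 hspos)
  have hge : r₀ ≤ (h : ℝ) * s := by
    have := Nat.le_ceil (r₀ / s)
    rw [div_le_iff₀ hspos] at this
    linarith [this]
  have hlt : (h : ℝ) * s < r₁ := by
    have := Nat.ceil_lt_add_one (le_of_lt (div_pos hr0 hspos))
    have h2 : (h : ℝ) * s < (r₀ / s + 1) * s := by
      apply mul_lt_mul_of_pos_right this hspos
    rw [add_mul, div_mul_cancel₀ _ (ne_of_gt hspos)] at h2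
    linarith
  refine ⟨h, ℓ, hhpos, hℓpos, ?_, ?_, ?_⟩ <;>
    rw [show (h : ℝ) * zbar / (π * A * (ℓ : ℝ)) = (h : ℝ) * s from mul_div_assoc _ _ _]
  · linarith
  · exact hge
  · exact hlt

lemma approx (A zbar D c y ε : ℝ) (hA : 0 < A) (hz : 0 < zbar) (hD : 0 < D)
    (hy : 0 < y) (hε : 0 < ε) (hcy : c < 1 + D / y ^ 2) :
    ∃ h ℓ : ℕ, 0 < h ∧ 0 < ℓ ∧ c < (h : ℝ) * zbar / (π * A * (ℓ : ℝ)) ∧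
      |y - Real.sqrt (D / ((h : ℝ) * zbar / (π * A * (ℓ : ℝ)) - 1))| < ε := by
  set z₁ : ℝ := max (y / 2) (y - ε / 2) with hz₁_def
  have hz₁pos : 0 < z₁ := lt_max_of_lt_left (by linarith)
  have hz₁lt : z₁ < y := max_lt (by linarith) (by linarith)
  have hz₁ge : y - ε / 2 ≤ z₁ := le_max_right _ _
  have hsq : z₁ ^ 2 < y ^ 2 := by nlinarith
  have hr01 : 1 + D / y ^ 2 < 1 + D / z₁ ^ 2 := by
    have := div_lt_div_of_pos_left hD (pow_pos hz₁pos 2) hsq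
    linarith
  obtain ⟨h, ℓ, hh, hℓ, hc, hge, hlt⟩ :=
    exists_hl A zbar c (1 + D / y ^ 2) (1 + D / z₁ ^ 2) hA hz (by positivity) hcy hr01
  set r : ℝ := (h : ℝ) * zbar / (π * A * (ℓ : ℝ))
  have hy2 : (0:ℝ) < y ^ 2 := pow_pos hy 2
  have hz₁2 : (0:ℝ) < z₁ ^ 2 := pow_pos hz₁pos 2
  have hr1pos : 0 < r - 1 := by
    have : 0 < D / y ^ 2 := div_pos hD hy2
    linarith
  have hup : D / (r - 1) ≤ y ^ 2 := by
    rw [div_le_iff₀ hr1pos]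
    have : D / y ^ 2 ≤ r - 1 := by linarith
    rw [div_le_iff₀ hy2] at this
    nlinarith
  have hlo : z₁ ^ 2 < D / (r - 1) := by
    rw [lt_div_iff₀ hr1pos]
    have : r - 1 < D / z₁ ^ 2 := by linarith
    rw [lt_div_iff₀ hz₁2] at this
    nlinarith
  set w : ℝ := Real.sqrt (D / (r - 1)) with hw_def
  have hw_le : w ≤ y := by
    rw [hw_def, show y = Real.sqrt (y ^ 2) by rw [Real.sqrt_sq hy.le]]
    exact Real.sqrt_le_sqrt hup
  have hw_gt : z₁ < w := by
    rw [hw_def, show z₁ = Real.sqrt (z₁ ^ 2) by rw [Real.sqrt_sq hz₁pos.le]]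
    exact Real.sqrt_lt_sqrt (sq_nonneg _) hlo
  exact ⟨h, ℓ, hh, hℓ, hc, by rw [abs_of_nonneg (by linarith)]; linarith⟩

/-- Density of the admissible central parameters `z₀` of spiraling magnetic geodesics
translated by central lattice elements: for `A > 0`, `E > |B|` and `z̄ > 0`, the set
`S⁻` is dense in `(-E-B, 0)`, the set `S⁺` is dense in `(0, E-B)`, and `S⁻ ∪ S⁺` is
dense in `[-E-B, E-B]`. -/
theorem stmt17 (A B E zbar : ℝ) (hA : 0 < A) (hE : |B| < E) (hz : 0 < zbar) :
    Set.Ioo (-E - B) 0 ⊆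
      closure {z : ℝ | ∃ h ℓ : ℕ, 0 < h ∧ 0 < ℓ ∧
        2 * E / (E + B) < (h : ℝ) * zbar / (π * A * (ℓ : ℝ)) ∧
        z = -Real.sqrt ((E ^ 2 - B ^ 2) / ((h : ℝ) * zbar / (π * A * (ℓ : ℝ)) - 1))} ∧
    Set.Ioo 0 (E - B) ⊆
      closure {z : ℝ | ∃ h ℓ : ℕ, 0 < h ∧ 0 < ℓ ∧
        2 * E / (E - B) < (h : ℝ) * zbar / (π * A * (ℓ : ℝ)) ∧
        z = Real.sqrt ((E ^ 2 - B ^ 2) / ((h : ℝ) * zbar / (π * A * (ℓ : ℝ)) - 1))} ∧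
    Set.Icc (-E - B) (E - B) ⊆
      closure ({z : ℝ | ∃ h ℓ : ℕ, 0 < h ∧ 0 < ℓ ∧
        2 * E / (E + B) < (h : ℝ) * zbar / (π * A * (ℓ : ℝ)) ∧
        z = -Real.sqrt ((E ^ 2 - B ^ 2) / ((h : ℝ) * zbar / (π * A * (ℓ : ℝ)) - 1))} ∪
        {z : ℝ | ∃ h ℓ : ℕ, 0 < h ∧ 0 < ℓ ∧
        2 * E / (E - B) < (h : ℝ) * zbar / (π * A * (ℓ : ℝ)) ∧
        z = Real.sqrt ((E ^ 2 - B ^ 2) / ((h : ℝ) * zbar / (π * A * (ℓ : ℝ)) - 1))}) := by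
  have hEB : -E < B ∧ B < E := abs_lt.mp hE
  have hEmB : 0 < E - B := by linarith [hEB.2]
  have hEpB : 0 < E + B := by linarith [hEB.1]
  have hD : 0 < E ^ 2 - B ^ 2 := by nlinarith
  set D : ℝ := E ^ 2 - B ^ 2 with hD_def
  -- the two key identities
  have hidm : 2 * E / (E + B) = 1 + D / (E + B) ^ 2 := by
    rw [hD_def]; field_simp; ring
  have hidp : 2 * E / (E - B) = 1 + D / (E - B) ^ 2 := by
    rw [hD_def]; field_simp; ring
  have keym : Set.Ioo (-E - B) 0 ⊆
      closure {z : ℝ | ∃ h ℓ : ℕ, 0 < h ∧ 0 < ℓ ∧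
        2 * E / (E + B) < (h : ℝ) * zbar / (π * A * (ℓ : ℝ)) ∧
        z = -Real.sqrt ((E ^ 2 - B ^ 2) / ((h : ℝ) * zbar / (π * A * (ℓ : ℝ)) - 1))} := by
    intro z hz'
    obtain ⟨hz1, hz2⟩ := hz'
    rw [Metric.mem_closure_iff]
    intro ε hε
    set y : ℝ := -z with hy_def
    have hy : 0 < y := by linarith
    have hylt : y < E + B := by rw [hy_def]; linarith
    have hcy : 2 * E / (E + B) < 1 + D / y ^ 2 := by
      rw [hidm]
      have hsq : y ^ 2 < (E + B) ^ 2 := by nlinarith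
      have := div_lt_div_of_pos_left hD (pow_pos hy 2) hsq
      linarith
    obtain ⟨h, ℓ, hh, hℓ, hc, hd⟩ :=
      approx A zbar D (2 * E / (E + B)) y ε hA hz hD hy hε hcy
    refine ⟨-Real.sqrt (D / ((h : ℝ) * zbar / (π * A * (ℓ : ℝ)) - 1)),
      ⟨h, ℓ, hh, hℓ, hc, by rw [hD_def]⟩, ?_⟩
    rw [Real.dist_eq]
    have : z - -Real.sqrt (D / ((h : ℝ) * zbar / (π * A * (ℓ : ℝ)) - 1)) =
        -(y - Real.sqrt (D / ((h : ℝ) * zbar / (π * A * (ℓ : ℝ)) - 1))) := by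
      rw [hy_def]; ring
    rw [this, abs_neg]
    exact hd
  have keyp : Set.Ioo 0 (E - B) ⊆
      closure {z : ℝ | ∃ h ℓ : ℕ, 0 < h ∧ 0 < ℓ ∧
        2 * E / (E - B) < (h : ℝ) * zbar / (π * A * (ℓ : ℝ)) ∧
        z = Real.sqrt ((E ^ 2 - B ^ 2) / ((h : ℝ) * zbar / (π * A * (ℓ : ℝ)) - 1))} := by
    intro z hz'
    obtain ⟨hz1, hz2⟩ := hz'
    rw [Metric.mem_closure_iff]
    intro ε hε
    have hcy : 2 * E / (E - B) < 1 + D / z ^ 2 := by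
      rw [hidp]
      have hsq : z ^ 2 < (E - B) ^ 2 := by nlinarith
      have := div_lt_div_of_pos_left hD (pow_pos hz1 2) hsq
      linarith
    obtain ⟨h, ℓ, hh, hℓ, hc, hd⟩ :=
      approx A zbar D (2 * E / (E - B)) z ε hA hz hD hz1 hε hcy
    exact ⟨Real.sqrt (D / ((h : ℝ) * zbar / (π * A * (ℓ : ℝ)) - 1)),
      ⟨h, ℓ, hh, hℓ, hc, by rw [hD_def]⟩, by rw [Real.dist_eq]; exact hd⟩
  refine ⟨keym, keyp, ?_⟩
  intro x hx
  have h0 : -E - B < 0 := by linarith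
  have hclm : Set.Icc (-E - B) 0 ⊆ closure ({z : ℝ | ∃ h ℓ : ℕ, 0 < h ∧ 0 < ℓ ∧
        2 * E / (E + B) < (h : ℝ) * zbar / (π * A * (ℓ : ℝ)) ∧
        z = -Real.sqrt ((E ^ 2 - B ^ 2) / ((h : ℝ) * zbar / (π * A * (ℓ : ℝ)) - 1))} ∪ {z : ℝ | ∃ h ℓ : ℕ, 0 < h ∧ 0 < ℓ ∧
        2 * E / (E - B) < (h : ℝ) * zbar / (π * A * (ℓ : ℝ)) ∧
        z = Real.sqrt ((E ^ 2 - B ^ 2) / ((h : ℝ) * zbar / (π * A * (ℓ : ℝ)) - 1))}) := by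
    calc Set.Icc (-E - B) 0 = closure (Set.Ioo (-E - B) 0) := (closure_Ioo h0.ne).symm
    _ ⊆ closure (closure {z : ℝ | ∃ h ℓ : ℕ, 0 < h ∧ 0 < ℓ ∧
        2 * E / (E + B) < (h : ℝ) * zbar / (π * A * (ℓ : ℝ)) ∧
        z = -Real.sqrt ((E ^ 2 - B ^ 2) / ((h : ℝ) * zbar / (π * A * (ℓ : ℝ)) - 1))}) := closure_mono keym
    _ = closure {z : ℝ | ∃ h ℓ : ℕ, 0 < h ∧ 0 < ℓ ∧
        2 * E / (E + B) < (h : ℝ) * zbar / (π * A * (ℓ : ℝ)) ∧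
        z = -Real.sqrt ((E ^ 2 - B ^ 2) / ((h : ℝ) * zbar / (π * A * (ℓ : ℝ)) - 1))} := closure_closure
    _ ⊆ closure ({z : ℝ | ∃ h ℓ : ℕ, 0 < h ∧ 0 < ℓ ∧
        2 * E / (E + B) < (h : ℝ) * zbar / (π * A * (ℓ : ℝ)) ∧
        z = -Real.sqrt ((E ^ 2 - B ^ 2) / ((h : ℝ) * zbar / (π * A * (ℓ : ℝ)) - 1))} ∪ {z : ℝ | ∃ h ℓ : ℕ, 0 < h ∧ 0 < ℓ ∧
        2 * E / (E - B) < (h : ℝ) * zbar / (π * A * (ℓ : ℝ)) ∧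
        z = Real.sqrt ((E ^ 2 - B ^ 2) / ((h : ℝ) * zbar / (π * A * (ℓ : ℝ)) - 1))}) := closure_mono Set.subset_union_left
  have hclp : Set.Icc 0 (E - B) ⊆ closure ({z : ℝ | ∃ h ℓ : ℕ, 0 < h ∧ 0 < ℓ ∧
        2 * E / (E + B) < (h : ℝ) * zbar / (π * A * (ℓ : ℝ)) ∧
        z = -Real.sqrt ((E ^ 2 - B ^ 2) / ((h : ℝ) * zbar / (π * A * (ℓ : ℝ)) - 1))} ∪ {z : ℝ | ∃ h ℓ : ℕ, 0 < h ∧ 0 < ℓ ∧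
        2 * E / (E - B) < (h : ℝ) * zbar / (π * A * (ℓ : ℝ)) ∧
        z = Real.sqrt ((E ^ 2 - B ^ 2) / ((h : ℝ) * zbar / (π * A * (ℓ : ℝ)) - 1))}) := by
    calc Set.Icc 0 (E - B) = closure (Set.Ioo 0 (E - B)) := (closure_Ioo hEmB.ne).symm
    _ ⊆ closure (closure {z : ℝ | ∃ h ℓ : ℕ, 0 < h ∧ 0 < ℓ ∧
        2 * E / (E - B) < (h : ℝ) * zbar / (π * A * (ℓ : ℝ)) ∧
        z = Real.sqrt ((E ^ 2 - B ^ 2) / ((h : ℝ) * zbar / (π * A * (ℓ : ℝ)) - 1))}) := closure_mono keyp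
    _ = closure {z : ℝ | ∃ h ℓ : ℕ, 0 < h ∧ 0 < ℓ ∧
        2 * E / (E - B) < (h : ℝ) * zbar / (π * A * (ℓ : ℝ)) ∧
        z = Real.sqrt ((E ^ 2 - B ^ 2) / ((h : ℝ) * zbar / (π * A * (ℓ : ℝ)) - 1))} := closure_closure
    _ ⊆ closure ({z : ℝ | ∃ h ℓ : ℕ, 0 < h ∧ 0 < ℓ ∧
        2 * E / (E + B) < (h : ℝ) * zbar / (π * A * (ℓ : ℝ)) ∧
        z = -Real.sqrt ((E ^ 2 - B ^ 2) / ((h : ℝ) * zbar / (π * A * (ℓ : ℝ)) - 1))} ∪ {z : ℝ | ∃ h ℓ : ℕ, 0 < h ∧ 0 < ℓ ∧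
        2 * E / (E - B) < (h : ℝ) * zbar / (π * A * (ℓ : ℝ)) ∧
        z = Real.sqrt ((E ^ 2 - B ^ 2) / ((h : ℝ) * zbar / (π * A * (ℓ : ℝ)) - 1))}) := closure_mono Set.subset_union_right
  rcases le_or_gt x 0 with hx0 | hx0
  · exact hclm ⟨hx.1, hx0⟩
  · exact hclp ⟨hx0.le, hx.2⟩
end

section
/- Let E > |B| and z̄ > 0, and let 𝔈 = { (u₀,v₀,z₀) ∈ ℝ³ : (u₀²+v₀²)/A + (z₀+B)² = E² } be the set of parameters of magnetic geodesics through e of energy E. Then the subset of all (u₀,v₀,z₀) ∈ 𝔈 for which there exist a nonzero integer h and ω ≠ 0 such that σ_{u₀,v₀,z₀} is (0,0,hz̄)-periodic with period ω is dense in 𝔈. -/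
open Real

noncomputable section

lemma magGeo_ne (A B u₀ v₀ z₀ : ℝ) (h : z₀ ≠ 0) (t : ℝ) :
    magGeo A B u₀ v₀ z₀ t =
    ((u₀ / z₀) * Real.sin (z₀ * t / A) - (v₀ / z₀) * (1 - Real.cos (z₀ * t / A)),
     (u₀ / z₀) * (1 - Real.cos (z₀ * t / A)) + (v₀ / z₀) * Real.sin (z₀ * t / A),
     (z₀ + B + (u₀ ^ 2 + v₀ ^ 2) / (2 * A * z₀)) * t
       - ((u₀ ^ 2 + v₀ ^ 2) / (2 * z₀ ^ 2)) * Real.sin (z₀ * t / A)) := by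
  rw [magGeo]; simp [h]

lemma auxPos (D c : ℝ) (hD : 0 < D) (hc : 0 < c) (w' ε : ℝ) (hw' : 0 < w') (hε : 0 < ε) :
    ∃ w : ℝ, |w - w'| < ε ∧ 0 < w ∧ ∃ q : ℚ, 0 < q ∧ 1/2 + D/(2*w^2) = q * c := by
  set v := max (w'/2) (w' - ε/2) with hv
  have hv0 : 0 < v := lt_of_lt_of_le (by linarith) (le_max_left _ _)
  have hvw : v < w' := max_lt (by linarith) (by linarith)
  have hfv : 1/2 + D/(2*w'^2) < 1/2 + D/(2*v^2) := by
    have h1 : D/(2*w'^2) < D/(2*v^2) := by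
      rw [div_lt_div_iff₀ (by positivity) (by positivity)]
      nlinarith [mul_pos (sub_pos.mpr hvw) (show (0:ℝ) < w'+v by linarith), hD]
    linarith
  obtain ⟨q, hq1, hq2⟩ := exists_rat_btwn (div_lt_div_of_pos_right hfv hc)
  have hFl : 1/2 + D/(2*w'^2) < (q:ℝ)*c := (div_lt_iff₀ hc).mp hq1
  have hFr : (q:ℝ)*c < 1/2 + D/(2*v^2) := (lt_div_iff₀ hc).mp hq2
  have h0F : 0 < (q:ℝ)*c := by
    have : (0:ℝ) < 1/2 + D/(2*w'^2) := by positivity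
    linarith
  have hq0 : 0 < q := by
    have : (0:ℝ) < (q:ℝ) := by nlinarith
    exact_mod_cast this
  have h2F : 0 < 2*((q:ℝ)*c) - 1 := by
    have : 0 ≤ D/(2*w'^2) := by positivity
    linarith
  set F : ℝ := (q:ℝ)*c with hF
  set w := Real.sqrt (D/(2*F-1)) with hwdef
  have hwsq : w^2 = D/(2*F-1) := Real.sq_sqrt (by positivity)
  have hw0 : 0 < w := Real.sqrt_pos.mpr (by positivity)
  have hww' : w < w' := by
    have hFl' : D/(2*w'^2) < F - 1/2 := by linarith
    have hFl'' : D < (F - 1/2)*(2*w'^2) := (div_lt_iff₀ (by positivity)).mp hFl'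
    have h1 : w^2 < w'^2 := by
      rw [hwsq, div_lt_iff₀ h2F]; nlinarith
    exact lt_of_pow_lt_pow_left₀ 2 hw'.le h1
  have hvw2 : v < w := by
    have hFr' : F - 1/2 < D/(2*v^2) := by linarith
    have hFr'' : (F - 1/2)*(2*v^2) < D := (lt_div_iff₀ (by positivity)).mp hFr'
    have h1 : v^2 < w^2 := by
      rw [hwsq, lt_div_iff₀ h2F]; nlinarith
    exact lt_of_pow_lt_pow_left₀ 2 hw0.le h1
  refine ⟨w, ?_, hw0, q, hq0, ?_⟩
  · rw [abs_lt]
    have := le_max_right (w'/2) (w' - ε/2)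
    constructor <;> [linarith [hv ▸ this]; linarith]
  · rw [hwsq]
    have hD' : D ≠ 0 := hD.ne'
    have h2F' : 2*F - 1 ≠ 0 := h2F.ne'
    have : D/(2*(D/(2*F-1))) = (2*F-1)/2 := by
      field_simp
    rw [this]; linarith

lemma auxAll (D c : ℝ) (hD : 0 < D) (hc : 0 < c) (w' ε : ℝ) (hε : 0 < ε) :
    ∃ w : ℝ, |w - w'| < ε ∧ w ≠ 0 ∧ ∃ q : ℚ, 0 < q ∧ 1/2 + D/(2*w^2) = q * c := by
  rcases lt_trichotomy w' 0 with h|h|h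
  · obtain ⟨w, h1, h2, q, hq1, hq2⟩ := auxPos D c hD hc (-w') ε (by linarith) hε
    refine ⟨-w, ?_, by simpa using h2.ne', q, hq1, ?_⟩
    · rw [show -w - w' = -(w - -w') by ring, abs_neg]; exact h1
    · rw [show ((-w):ℝ)^2 = w^2 by ring]; exact hq2
  · obtain ⟨w, h1, h2, q, hq1, hq2⟩ := auxPos D c hD hc (ε/2) (ε/2) (by linarith) (by linarith)
    refine ⟨w, ?_, h2.ne', q, hq1, hq2⟩
    subst h
    rw [abs_lt] at h1 ⊢
    constructor <;> [linarith; linarith]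
  · obtain ⟨w, h1, h2, q, hq1, hq2⟩ := auxPos D c hD hc w' ε h hε
    exact ⟨w, h1, h2.ne', q, hq1, hq2⟩

set_option maxHeartbeats 1000000 in
/-- Density of periodic parameters on the energy ellipsoid: for `E > |B|` and `z̄ > 0`,
the parameters `(u₀,v₀,z₀)` of energy `E` whose magnetic geodesic through `e` is
`(0,0,hz̄)`-periodic for some nonzero integer `h` are dense in the ellipsoid
`𝔈 = { (u₀,v₀,z₀) : (u₀²+v₀²)/A + (z₀+B)² = E² }`. -/
theorem stmt18 (A B E zbar : ℝ) (hA : 0 < A) (hE : |B| < E) (hz : 0 < zbar) :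
    {p : ℝ × ℝ × ℝ | (p.1 ^ 2 + p.2.1 ^ 2) / A + (p.2.2 + B) ^ 2 = E ^ 2} ⊆
      closure {p : ℝ × ℝ × ℝ |
        (p.1 ^ 2 + p.2.1 ^ 2) / A + (p.2.2 + B) ^ 2 = E ^ 2 ∧
        ∃ h : ℤ, h ≠ 0 ∧ ∃ ω : ℝ, ω ≠ 0 ∧
          ∀ t, Hmul (0, 0, (h : ℝ) * zbar) (magGeo A B p.1 p.2.1 p.2.2 t)
            = magGeo A B p.1 p.2.1 p.2.2 (t + ω)} := by
  intro p hp
  obtain ⟨u, v, z⟩ := p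
  simp only [Set.mem_setOf_eq] at hp
  have hπ := Real.pi_pos
  have hE0 : 0 < E := lt_of_le_of_lt (abs_nonneg B) hE
  have hD : 0 < E^2 - B^2 := by nlinarith [sq_abs B, abs_nonneg B]
  have hc : 0 < zbar/(2*π*A) := by positivity
  have huv : u^2 + v^2 = A*(E^2 - (z+B)^2) := by
    field_simp [hA.ne'] at hp
    nlinarith [hp]
  set rs := Real.sqrt (u^2+v^2) with hrs
  obtain ⟨a, b, hab, hau, hbv⟩ : ∃ a b : ℝ, a^2+b^2 = 1 ∧ a*rs = u ∧ b*rs = v := by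
    rcases eq_or_lt_of_le (show (0:ℝ) ≤ u^2+v^2 by positivity) with h0|h0
    · have hu : u = 0 := by nlinarith
      have hv0 : v = 0 := by nlinarith
      exact ⟨1, 0, by norm_num, by simp [hrs, hu, hv0], by simp [hrs, hv0]⟩
    · have hrs0 : 0 < rs := Real.sqrt_pos.mpr h0
      have hrssq : rs^2 = u^2+v^2 := Real.sq_sqrt h0.le
      refine ⟨u/rs, v/rs, ?_, by field_simp, by field_simp⟩
      field_simp
      linarith [hrssq]
  set Φ : ℝ → ℝ×ℝ×ℝ := fun w =>
    (a * Real.sqrt (A*(E^2 - (w+B)^2)), b * Real.sqrt (A*(E^2 - (w+B)^2)), w) with hΦ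
  have hΦz : Φ z = (u, v, z) := by
    have h1 : Real.sqrt (A*(E^2-(z+B)^2)) = rs := by rw [hrs, huv]
    simp only [hΦ, h1, hau, hbv]
  have hcont : Continuous Φ := by
    refine Continuous.prodMk (continuous_const.mul ?_)
      (Continuous.prodMk (continuous_const.mul ?_) continuous_id) <;>
    exact Real.continuous_sqrt.comp (by continuity)
  rw [Metric.mem_closure_iff]
  intro ε hε
  obtain ⟨η, hη0, hηball⟩ := Metric.continuous_iff.mp hcont z ε hε
  have hzB : (z+B)^2 ≤ E^2 := by
    have h0 : (0:ℝ) ≤ (u^2+v^2)/A := by positivity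
    linarith
  -- choose w' strictly inside the interval
  set θ := min (η/(2*E+2)) 1 with hθdef
  have hθ0 : 0 < θ := lt_min (by positivity) one_pos
  have hθ1 : θ ≤ 1 := min_le_right _ _
  have hθη : θ * E < η/2 := by
    have h1 : θ ≤ η/(2*E+2) := min_le_left _ _
    have h2 : η/(2*E+2) * (2*E+2) = η := div_mul_cancel₀ _ (by positivity)
    have h3 : θ*(2*E+2) ≤ η := h2 ▸ mul_le_mul_of_nonneg_right h1 (by positivity)
    linarith [h3, hθ0]
  set w' := -B + (z+B)*(1-θ) with hw'def
  have hw'B : (w'+B)^2 < E^2 := by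
    have h1 : w' + B = (z+B)*(1-θ) := by rw [hw'def]; ring
    rw [h1, mul_pow]
    linarith [mul_nonneg (sub_nonneg.mpr hzB) (sq_nonneg (1-θ)),
      mul_pos (mul_pos hE0 hE0) (mul_pos hθ0 (show (0:ℝ) < 2 - θ by linarith))]
  have hw'z : |w' - z| < η/2 := by
    have h1 : w' - z = -(θ*(z+B)) := by rw [hw'def]; ring
    rw [h1, abs_neg, abs_mul, abs_of_pos hθ0]
    have h2 : |z+B| ≤ E := abs_le.mpr
      ⟨by nlinarith [sq_nonneg (z+B+E)], by nlinarith [sq_nonneg (z+B-E)]⟩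
    nlinarith [abs_nonneg (z+B)]
  have hw'Babs : |w'+B| < E := abs_lt.mpr
    ⟨by nlinarith [sq_nonneg (w'+B+E)], by nlinarith [sq_nonneg (w'+B-E)]⟩
  set ε₂ := min (η/2) (E - |w'+B|) with hε₂def
  have hε₂0 : 0 < ε₂ := lt_min (by linarith) (by linarith)
  obtain ⟨w, hw1, hw2, q, hq0, hq⟩ := auxAll (E^2-B^2) (zbar/(2*π*A)) hD hc w' ε₂ hε₂0
  have hwB : |w+B| < E := by
    have h1 : |w - w'| < E - |w'+B| := lt_of_lt_of_le hw1 (min_le_right _ _)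
    calc |w+B| = |(w'+B) + (w-w')| := by rw [show w+B = (w'+B)+(w-w') by ring]
      _ ≤ |w'+B| + |w-w'| := abs_add_le _ _
      _ < E := by linarith
  obtain ⟨hwBl, hwBr⟩ := abs_lt.mp hwB
  have hwB2 : (w+B)^2 ≤ E^2 := by nlinarith
  have hwz : |w - z| < η := by
    have h1 : |w - w'| < η/2 := lt_of_lt_of_le hw1 (min_le_left _ _)
    calc |w - z| = |(w-w') + (w'-z)| := by rw [show w-z = (w-w')+(w'-z) by ring]
      _ ≤ |w-w'| + |w'-z| := abs_add_le _ _
      _ < η := by linarith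
  set R := Real.sqrt (A*(E^2-(w+B)^2)) with hRdef
  have hR2 : R^2 = A*(E^2-(w+B)^2) := Real.sq_sqrt (by nlinarith)
  have hsum : (a*R)^2 + (b*R)^2 = A*(E^2-(w+B)^2) := by
    have h1 : (a*R)^2+(b*R)^2 = (a^2+b^2)*R^2 := by ring
    rw [h1, hab, one_mul, hR2]
  have hΦw : Φ w = (a*R, b*R, w) := by simp only [hΦ, hRdef]
  refine ⟨Φ w, ?_, ?_⟩
  · rw [hΦw, Set.mem_setOf_eq]
    constructor
    · show ((a*R)^2 + (b*R)^2)/A + (w+B)^2 = E^2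
      rw [hsum, mul_div_assoc]
      field_simp
      ring
    · set ω := 2*π*A*(q.den:ℝ)/w with hωdef
      have hden : (0:ℝ) < (q.den:ℝ) := by exact_mod_cast q.pos
      refine ⟨q.num, Rat.num_ne_zero.mpr hq0.ne', ω, ?_, ?_⟩
      · exact div_ne_zero (ne_of_gt (mul_pos (by positivity) hden)) hw2
      · intro t
        have hang : w*(t+ω)/A = w*t/A + ((q.den:ℤ):ℝ)*(2*π) := by
          rw [hωdef]; push_cast; field_simp
        have hsin : Real.sin (w*(t+ω)/A) = Real.sin (w*t/A) := by
          rw [hang]; exact Real.sin_add_int_mul_two_pi _ _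
        have hcos : Real.cos (w*(t+ω)/A) = Real.cos (w*t/A) := by
          rw [hang]; exact Real.cos_add_int_mul_two_pi _ _
        have hnum : (q:ℝ)*(q.den:ℝ) = (q.num:ℝ) := by
          rw [Rat.cast_def]; field_simp
        have hcω : (w + B + ((a*R)^2+(b*R)^2)/(2*A*w)) * ω = (q.num:ℝ) * zbar := by
          have e1 : w + B + ((a*R)^2+(b*R)^2)/(2*A*w) = w*(1/2 + (E^2-B^2)/(2*w^2)) := by
            rw [hsum]; field_simp [hw2, hA.ne']; ring
          rw [e1, hq, hωdef, ← hnum]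
          field_simp
        show Hmul (0,0,(q.num:ℝ)*zbar) (magGeo A B (a*R) (b*R) w t)
            = magGeo A B (a*R) (b*R) w (t+ω)
        rw [magGeo_ne A B _ _ _ hw2 t, magGeo_ne A B _ _ _ hw2 (t+ω)]
        rw [Hmul]
        simp only [Prod.mk.injEq]
        refine ⟨by rw [hsin, hcos]; ring, by rw [hsin, hcos]; ring, ?_⟩
        rw [hsin]
        linear_combination -hcω
  · rw [← hΦz, dist_comm]
    exact hηball w (by rwa [Real.dist_eq])
end
end
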